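/- arXiv:2602.21960 — 7 statements merged into one kernel-verified Lean document; each statement's English description precedes it below -/
import Mathlib

section
/- The multiset projectivity relation on finite multisets of a poset P, defined by N << M iff there exists a surjective function f from M onto N with f(p) ≤ p for all p ∈ M, is a partial order (in particular antisymmetric). -/
namespace Paper

/-- Multiset projectivity: `MProj r N M` (`N << M`) holds iff there is a surjective
multiset map `f : M ↠ N` with `r (f p) p` for every occurrence `p` of `M`;
equivalently, `M` splits into nonempty fibers indexed by the occurrences of `N`. -/
def MProj {α : Type*} (r : α → α → Prop) (N M : Multiset α) : Prop :=
  ∃ L : Multiset (α × Multiset α),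
    L.map Prod.fst = N ∧ (L.map Prod.snd).sum = M ∧
    ∀ x ∈ L, x.2 ≠ 0 ∧ ∀ p ∈ x.2, r x.1 p

/-- Multiset embeddability: `MEmbed r N M` (`N ⪯ M`) holds iff there is an injective
multiset map `g : N ↪ M` with `r q (g q)` for all `q ∈ N`; equivalently, `N` is
related pointwise to a sub-multiset of `M`. -/
def MEmbed {α : Type*} (r : α → α → Prop) (N M : Multiset α) : Prop :=
  ∃ M' ≤ M, Multiset.Rel r N M'

/-- splitting a multiset along a decomposition of its image under `map f`. -/
lemma map_eq_add_split {α β : Type*} (f : α → β) :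
    ∀ (s : Multiset α) (t u : Multiset β), s.map f = t + u →
      ∃ a b : Multiset α, s = a + b ∧ a.map f = t ∧ b.map f = u := by
  intro s
  induction s using Multiset.induction with
  | empty =>
    intro t u h
    rw [Multiset.map_zero] at h
    have h0 : t + u = 0 := h.symm
    have ht : t = 0 := Multiset.le_zero.mp (h0 ▸ Multiset.le_add_right t u)
    have hu : u = 0 := Multiset.le_zero.mp (h0 ▸ Multiset.le_add_left u t)
    exact ⟨0, 0, by simp, by simp [ht], by simp [hu]⟩
  | cons x s ih =>
    intro t u h
    rw [Multiset.map_cons] at h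
    have hx : f x ∈ t + u := by rw [← h]; exact Multiset.mem_cons_self _ _
    rcases Multiset.mem_add.mp hx with hxt | hxu
    · obtain ⟨t', rfl⟩ := Multiset.exists_cons_of_mem hxt
      have h' : s.map f = t' + u := by
        have := h
        rw [Multiset.cons_add] at this
        exact (Multiset.cons_inj_right _).mp this
      obtain ⟨a, b, rfl, ha, hb⟩ := ih t' u h'
      exact ⟨x ::ₘ a, b, by rw [Multiset.cons_add], by simp [ha], hb⟩
    · obtain ⟨u', rfl⟩ := Multiset.exists_cons_of_mem hxu
      have h' : s.map f = t + u' := by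
        rw [Multiset.add_cons] at h
        exact (Multiset.cons_inj_right _).mp h
      obtain ⟨a, b, rfl, ha, hb⟩ := ih t u' h'
      exact ⟨a, x ::ₘ b, by rw [Multiset.add_cons], ha, by simp [hb]⟩


lemma card_le_sum_card {α : Type*} :
    ∀ L : Multiset (α × Multiset α), (∀ x ∈ L, x.2 ≠ 0) →
      Multiset.card L ≤ Multiset.card ((L.map Prod.snd).sum) := by
  intro L
  induction L using Multiset.induction with
  | empty => simp
  | cons x L ih =>
    intro h
    rw [Multiset.map_cons, Multiset.sum_cons, Multiset.card_add, Multiset.card_cons]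
    have h1 : 1 ≤ Multiset.card x.2 :=
      Multiset.card_pos.mpr (h x (Multiset.mem_cons_self _ _))
    have h2 := ih (fun y hy => h y (Multiset.mem_cons_of_mem hy))
    omega

lemma rel_of_card_eq {α : Type*} {r : α → α → Prop} :
    ∀ L : Multiset (α × Multiset α),
      (∀ x ∈ L, x.2 ≠ 0 ∧ ∀ p ∈ x.2, r x.1 p) →
      Multiset.card ((L.map Prod.snd).sum) = Multiset.card L →
      Multiset.Rel r (L.map Prod.fst) ((L.map Prod.snd).sum) := by
  intro L
  induction L using Multiset.induction with
  | empty => simp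
  | cons x L ih =>
    intro h hc
    rw [Multiset.map_cons, Multiset.sum_cons, Multiset.card_add, Multiset.card_cons] at hc
    have h1 : 1 ≤ Multiset.card x.2 :=
      Multiset.card_pos.mpr (h x (Multiset.mem_cons_self _ _)).1
    have h2 := card_le_sum_card L (fun y hy => (h y (Multiset.mem_cons_of_mem hy)).1)
    have hx1 : Multiset.card x.2 = 1 := by omega
    obtain ⟨p, hp⟩ := Multiset.card_eq_one.mp hx1
    have hrel := ih (fun y hy => h y (Multiset.mem_cons_of_mem hy)) (by omega)
    simp only [Multiset.map_cons, Multiset.sum_cons, hp, Multiset.singleton_add]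
    exact Multiset.Rel.cons
      ((h x (Multiset.mem_cons_self _ _)).2 p (by rw [hp]; exact Multiset.mem_singleton_self p))
      hrel

lemma exists_maximal_mem {P : Type*} [PartialOrder P] :
    ∀ M : Multiset P, M ≠ 0 → ∃ m ∈ M, ∀ x ∈ M, m ≤ x → x = m := by
  intro M
  induction M using Multiset.induction with
  | empty => intro h; exact absurd rfl h
  | cons a M ih =>
    intro _
    by_cases hM : M = 0
    · subst hM
      exact ⟨a, Multiset.mem_cons_self _ _, by
        intro x hx hax
        rcases Multiset.mem_cons.mp hx with rfl | h0
        · rfl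
        · simp at h0⟩
    · obtain ⟨m, hm, hmax⟩ := ih hM
      by_cases hma : m ≤ a
      · refine ⟨a, Multiset.mem_cons_self _ _, ?_⟩
        intro x hx hax
        rcases Multiset.mem_cons.mp hx with rfl | h0
        · rfl
        · have := hmax x h0 (le_trans hma hax)
          subst this
          exact le_antisymm hma hax
      · refine ⟨m, Multiset.mem_cons_of_mem hm, ?_⟩
        intro x hx hmx
        rcases Multiset.mem_cons.mp hx with rfl | h0
        · exact absurd hmx hma
        · exact hmax x h0 hmx

lemma rel_antisymm {P : Type*} [PartialOrder P] :
    ∀ n : ℕ, ∀ N M : Multiset P, Multiset.card N = n →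
      Multiset.Rel (· ≤ ·) N M → Multiset.Rel (· ≤ ·) M N → N = M := by
  intro n
  induction n with
  | zero =>
    intro N M hN h1 _
    have : N = 0 := Multiset.card_eq_zero.mp hN
    subst this
    exact (Multiset.rel_zero_left.mp h1).symm
  | succ n ih =>
    intro N M hN h1 h2
    have hM0 : M ≠ 0 := by
      intro h
      subst h
      rw [Multiset.rel_zero_right.mp h1] at hN
      simp at hN
    obtain ⟨m, hm, hmax⟩ := exists_maximal_mem M hM0
    obtain ⟨M₀, rfl⟩ := Multiset.exists_cons_of_mem hm
    -- from h2 : Rel (m ::ₘ M₀) N, pair m with n₁ ∈ N, m ≤ n₁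
    obtain ⟨n₁, N₀, hmn, hrelMN, rfl⟩ := Multiset.rel_cons_left.mp h2
    -- n₁ ∈ N is related to some element of M by h1
    have hn1 : n₁ = m := by
      obtain ⟨m', Mrest, hle, _, hMeq⟩ := Multiset.rel_cons_left.mp h1
      have hm' : m' ∈ m ::ₘ M₀ := by rw [hMeq]; exact Multiset.mem_cons_self _ _
      have hmm : m' = m := hmax m' hm' (le_trans hmn hle)
      subst hmm
      exact le_antisymm hle hmn
    subst hn1
    -- from h1 : Rel (n₁ ::ₘ N₀) (n₁ ::ₘ M₀) extract pairing for the head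
    obtain ⟨b, M', hb, hrel', hMeq⟩ := Multiset.rel_cons_left.mp h1
    have hbm : b = n₁ := by
      have hbmem : b ∈ n₁ ::ₘ M₀ := by rw [hMeq]; exact Multiset.mem_cons_self _ _
      exact hmax b hbmem hb
    subst hbm
    have hM' : M₀ = M' := by rwa [Multiset.cons_inj_right] at hMeq
    subst hM'
    have : N₀ = M₀ := ih N₀ M₀ (by simpa using hN) hrel' hrelMN
    rw [this]

lemma mem_msum {α : Type*} {a : α} {S : Multiset (Multiset α)} :
    a ∈ S.sum ↔ ∃ s ∈ S, a ∈ s := Multiset.mem_join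

lemma mproj_trans_aux {α : Type*} {r : α → α → Prop} (htr : Transitive r) :
    ∀ L1 L2 : Multiset (α × Multiset α),
      (∀ x ∈ L1, x.2 ≠ 0 ∧ ∀ p ∈ x.2, r x.1 p) →
      (∀ x ∈ L2, x.2 ≠ 0 ∧ ∀ p ∈ x.2, r x.1 p) →
      L2.map Prod.fst = (L1.map Prod.snd).sum →
      MProj r (L1.map Prod.fst) ((L2.map Prod.snd).sum) := by
  intro L1
  induction L1 using Multiset.induction with
  | empty =>
    intro L2 _ _ hmap
    simp only [Multiset.map_zero, Multiset.sum_zero] at hmap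
    rw [Multiset.map_eq_zero] at hmap
    subst hmap
    exact ⟨0, by simp, by simp, by simp⟩
  | cons x L1 ih =>
    intro L2 h1 h2 hmap
    rw [Multiset.map_cons, Multiset.sum_cons] at hmap
    obtain ⟨A, B, rfl, hA, hB⟩ := map_eq_add_split Prod.fst L2 _ _ hmap
    have h2A : ∀ y ∈ A, y.2 ≠ 0 ∧ ∀ p ∈ y.2, r y.1 p :=
      fun y hy => h2 y (Multiset.mem_add.mpr (Or.inl hy))
    have h2B : ∀ y ∈ B, y.2 ≠ 0 ∧ ∀ p ∈ y.2, r y.1 p :=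
      fun y hy => h2 y (Multiset.mem_add.mpr (Or.inr hy))
    obtain ⟨L', hL1, hL2, hL3⟩ :=
      ih B (fun y hy => h1 y (Multiset.mem_cons_of_mem hy)) h2B hB
    refine ⟨(x.1, (A.map Prod.snd).sum) ::ₘ L', ?_, ?_, ?_⟩
    · rw [Multiset.map_cons, hL1, Multiset.map_cons]
    · rw [Multiset.map_cons, Multiset.sum_cons, hL2, Multiset.map_add,
        Multiset.sum_add]
    · intro y hy
      rcases Multiset.mem_cons.mp hy with rfl | hy'
      · constructor
        · -- the combined fiber is nonempty
          have hx2 : x.2 ≠ 0 := (h1 x (Multiset.mem_cons_self _ _)).1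
          have hA0 : A ≠ 0 := by
            intro h0
            rw [h0, Multiset.map_zero] at hA
            exact hx2 hA.symm
          obtain ⟨z, hz⟩ := Multiset.exists_mem_of_ne_zero hA0
          obtain ⟨p, hp⟩ := Multiset.exists_mem_of_ne_zero (h2A z hz).1
          intro h0
          have h0' : (Multiset.map Prod.snd A).sum = 0 := h0
          have : p ∈ (Multiset.map Prod.snd A).sum :=
            mem_msum.mpr ⟨z.2, Multiset.mem_map_of_mem _ hz, hp⟩
          rw [h0'] at this
          simp at this
        · intro p hp
          obtain ⟨F, hF, hpF⟩ := mem_msum.mp hp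
          obtain ⟨z, hz, rfl⟩ := Multiset.mem_map.mp hF
          have hz1 : z.1 ∈ x.2 := by
            rw [← hA]
            exact Multiset.mem_map_of_mem _ hz
          exact htr ((h1 x (Multiset.mem_cons_self _ _)).2 z.1 hz1)
            ((h2A z hz).2 p hpF)
      · exact hL3 y hy'

lemma mproj_card_le {α : Type*} {r : α → α → Prop} {N M : Multiset α}
    (h : MProj r N M) : Multiset.card N ≤ Multiset.card M := by
  obtain ⟨L, hL1, hL2, hL3⟩ := h
  calc Multiset.card N = Multiset.card L := by rw [← hL1, Multiset.card_map]
    _ ≤ Multiset.card ((L.map Prod.snd).sum) :=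
        card_le_sum_card L (fun x hx => (hL3 x hx).1)
    _ = Multiset.card M := by rw [hL2]

/-- The multiset projectivity relation `<<` on finite multisets of a poset is a
partial order: reflexive, transitive, and antisymmetric. -/
theorem stmt_4 {P : Type*} [PartialOrder P] :
    (∀ N : Multiset P, MProj (· ≤ ·) N N) ∧
    (∀ N M K : Multiset P, MProj (· ≤ ·) N M → MProj (· ≤ ·) M K →
      MProj (· ≤ ·) N K) ∧
    (∀ N M : Multiset P, MProj (· ≤ ·) N M → MProj (· ≤ ·) M N → N = M) := by
  refine ⟨?_, ?_, ?_⟩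
  · -- reflexivity
    intro N
    refine ⟨N.map (fun p => (p, {p})), ?_, ?_, ?_⟩
    · rw [Multiset.map_map]; simp
    · rw [Multiset.map_map]; simp [Function.comp_def, Multiset.sum_map_singleton]
    · intro x hx
      obtain ⟨p, _, rfl⟩ := Multiset.mem_map.mp hx
      exact ⟨by simp, by simp⟩
  · -- transitivity
    intro N M K hNM hMK
    obtain ⟨L1, hL11, hL12, hL13⟩ := hNM
    obtain ⟨L2, hL21, hL22, hL23⟩ := hMK
    have := mproj_trans_aux (r := (· ≤ · : P → P → Prop))
      (fun _ _ _ hab hbc => le_trans hab hbc)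
      L1 L2 hL13 hL23 (by rw [hL21, hL12])
    rwa [hL11, hL22] at this
  · -- antisymmetry
    intro N M hNM hMN
    have hcard : Multiset.card N = Multiset.card M :=
      le_antisymm (mproj_card_le hNM) (mproj_card_le hMN)
    obtain ⟨L1, hL11, hL12, hL13⟩ := hNM
    obtain ⟨L2, hL21, hL22, hL23⟩ := hMN
    have hrel1 : Multiset.Rel (· ≤ ·) N M := by
      rw [← hL11, ← hL12]
      exact rel_of_card_eq L1 hL13
        (by rw [hL12, ← hcard, ← hL11, Multiset.card_map])
    have hrel2 : Multiset.Rel (· ≤ ·) M N := by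
      rw [← hL21, ← hL22]
      exact rel_of_card_eq L2 hL23
        (by rw [hL22, hcard, ← hL21, Multiset.card_map])
    exact rel_antisymm (Multiset.card N) N M rfl hrel1 hrel2

end Paper
end

section
/- For finite multisets M, N of a poset P: N << M if and only if N ⪯ M and for every element p of M there exists an element q of N with q ≤ p. -/
namespace Paper

lemma mproj_cons {α : Type*} {r : α → α → Prop} {N M : Multiset α} {p : α}
    (h : MProj r N M) (hq : ∃ q ∈ N, r q p) : MProj r N (p ::ₘ M) := by
  obtain ⟨L, hfst, hsnd, hcond⟩ := h
  obtain ⟨q, hqN, hrq⟩ := hq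
  rw [← hfst] at hqN
  obtain ⟨x, hxL, hx1⟩ := Multiset.mem_map.mp hqN
  obtain ⟨L', rfl⟩ := Multiset.exists_cons_of_mem hxL
  refine ⟨(x.1, p ::ₘ x.2) ::ₘ L', ?_, ?_, ?_⟩
  · rw [← hfst]; simp [Multiset.map_cons]
  · rw [← hsnd]; simp [Multiset.map_cons, Multiset.sum_cons, Multiset.cons_add]
  · intro y hy
    rcases Multiset.mem_cons.mp hy with h | h
    · subst h
      refine ⟨Multiset.cons_ne_zero, ?_⟩
      intro p' hp'
      rcases Multiset.mem_cons.mp hp' with h | h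
      · subst h; rw [hx1]; exact hrq
      · exact (hcond x hxL).2 p' h
    · exact hcond y (Multiset.mem_cons_of_mem h)

lemma mproj_add {α : Type*} {r : α → α → Prop} {N M R : Multiset α}
    (h : MProj r N M) (hR : ∀ p ∈ R, ∃ q ∈ N, r q p) : MProj r N (M + R) := by
  induction R using Multiset.induction with
  | empty => simpa using h
  | cons p R ih =>
    rw [Multiset.add_cons]
    exact mproj_cons (ih fun p hp => hR p (Multiset.mem_cons_of_mem hp))
      (hR p (Multiset.mem_cons_self p R))

lemma rel_mproj {α : Type*} {r : α → α → Prop} {N M : Multiset α}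
    (h : Multiset.Rel r N M) : MProj r N M := by
  induction h with
  | zero => exact ⟨0, by simp⟩
  | @cons a b as bs hab _ ih =>
    obtain ⟨L, hfst, hsnd, hcond⟩ := ih
    refine ⟨(a, {b}) ::ₘ L, by simp [hfst], by simp [hsnd], ?_⟩
    intro y hy
    rcases Multiset.mem_cons.mp hy with h | h
    · subst h
      exact ⟨by simp, by simpa using hab⟩
    · exact hcond y h

lemma mproj_membed {α : Type*} {r : α → α → Prop} {N M : Multiset α}
    (h : MProj r N M) : MEmbed r N M := by
  obtain ⟨L, hfst, hsnd, hcond⟩ := h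
  subst hfst hsnd
  induction L using Multiset.induction with
  | empty => exact ⟨0, le_refl _, by simp [Multiset.rel_zero_left]⟩
  | cons x L ih =>
    obtain ⟨M'', hle, hrel⟩ := ih fun y hy => hcond y (Multiset.mem_cons_of_mem hy)
    obtain ⟨hne, hall⟩ := hcond x (Multiset.mem_cons_self x L)
    obtain ⟨p, hp⟩ := Multiset.exists_mem_of_ne_zero hne
    refine ⟨p ::ₘ M'', ?_, ?_⟩
    · simp only [Multiset.map_cons, Multiset.sum_cons]
      rw [← Multiset.singleton_add p M'']
      exact add_le_add (Multiset.singleton_le.mpr hp) hle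
    · simp only [Multiset.map_cons]
      exact Multiset.Rel.cons (hall p hp) hrel

/-- `N << M` iff `N ⪯ M` and every element of `M` lies above some element of `N`. -/
theorem stmt_5 {P : Type*} [PartialOrder P] (N M : Multiset P) :
    MProj (· ≤ ·) N M ↔
      (MEmbed (· ≤ ·) N M ∧ ∀ p ∈ M, ∃ q ∈ N, q ≤ p) := by

  constructor
  · rintro ⟨L, hfst, hsnd, hcond⟩
    constructor
    · exact mproj_membed ⟨L, hfst, hsnd, hcond⟩
    · intro p hp
      rw [← hsnd] at hp
      obtain ⟨m, hm, hpm⟩ := Multiset.mem_join.mp hp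
      obtain ⟨x, hxL, hx2⟩ := Multiset.mem_map.mp hm
      refine ⟨x.1, ?_, ?_⟩
      · rw [← hfst]; exact Multiset.mem_map_of_mem _ hxL
      · exact (hcond x hxL).2 p (hx2 ▸ hpm)
  · rintro ⟨⟨M', hM'le, hrel⟩, hcover⟩
    obtain ⟨R, rfl⟩ := Multiset.le_iff_exists_add.mp hM'le
    refine mproj_add (rel_mproj hrel) ?_
    intro p hp
    exact hcover p (Multiset.mem_add.mpr (Or.inr hp))


end Paper
end

section
/- If P is a well-order (a well-founded linear order), then P is a better partial order: there is no bad super-sequence for ≤. -/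
namespace Paper

/-- `s` is an initial segment of the finite set `t` (w.r.t. the increasing enumerations). -/
def InitSegF (s t : Finset ℕ) : Prop :=
  s ⊆ t ∧ ∀ a ∈ s, ∀ b ∈ t, b ∉ s → a < b

/-- The finite set `s` is an initial segment of the set `B ⊆ ℕ`. -/
def InitSegS (s : Finset ℕ) (B : Set ℕ) : Prop :=
  ↑s ⊆ B ∧ ∀ a ∈ s, ∀ b ∈ B, b ∉ s → a < b

/-- `F` is a front on the infinite set `A ⊆ ℕ`. -/
def IsFront (F : Set (Finset ℕ)) (A : Set ℕ) : Prop :=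
  A.Infinite ∧
  (F = {∅} ∨ (⋃ s ∈ F, (↑s : Set ℕ)) = A) ∧
  (∀ s ∈ F, ∀ t ∈ F, InitSegF s t → s = t) ∧
  (∀ B : Set ℕ, B ⊆ A → B.Infinite → ∃! s, s ∈ F ∧ InitSegS s B)

/-- `t` is a shift of `s`: `s ◁ t`. -/
def Shift (s t : Finset ℕ) : Prop :=
  ∃ B : Set ℕ, B.Infinite ∧ InitSegS s B ∧ InitSegS t (B \ {sInf B})

/-- A super-sequence `f` on the front `F` is bad for the relation `r`
if `s ◁ t` implies `¬ r (f s) (f t)` for members of `F`. -/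
def IsBadSuperSeq {α : Type*} (r : α → α → Prop) (F : Set (Finset ℕ))
    (f : Finset ℕ → α) : Prop :=
  ∀ s ∈ F, ∀ t ∈ F, Shift s t → ¬ r (f s) (f t)

/-- `r` is a better partial order: there is no bad super-sequence for `r`. -/
def IsBpo {α : Type*} (r : α → α → Prop) : Prop :=
  ¬ ∃ (A : Set ℕ) (F : Set (Finset ℕ)) (f : Finset ℕ → α),
      IsFront F A ∧ IsBadSuperSeq r F f


/-- Every well-order (well-founded linear order) is a better partial order. -/
theorem stmt_7 {P : Type*} [LinearOrder P]
    (h : WellFounded ((· < ·) : P → P → Prop)) :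
    IsBpo ((· ≤ ·) : P → P → Prop) := by
  rintro ⟨A, F, f, ⟨hAinf, -, -, hF⟩, hbad⟩
  set B : ℕ → Set ℕ := fun n => Nat.rec A (fun _ Bn => Bn \ {sInf Bn}) n with hB
  have hBsucc : ∀ n, B (n + 1) = B n \ {sInf (B n)} := fun n => rfl
  have hBprop : ∀ n, B n ⊆ A ∧ (B n).Infinite := by
    intro n
    induction n with
    | zero => exact ⟨subset_rfl, hAinf⟩
    | succ n ih =>
      rw [hBsucc]
      exact ⟨(Set.diff_subset).trans ih.1, ih.2.diff (Set.finite_singleton _)⟩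
  have hs : ∀ n, ∃ s, s ∈ F ∧ InitSegS s (B n) := fun n =>
    (hF (B n) (hBprop n).1 (hBprop n).2).exists
  choose s hsF hsI using hs
  have hshift : ∀ n, Shift (s n) (s (n + 1)) := by
    intro n
    refine ⟨B n, (hBprop n).2, hsI n, ?_⟩
    rw [← hBsucc]; exact hsI (n + 1)
  have hdesc : ∀ n, f (s (n + 1)) < f (s n) := by
    intro n
    have := hbad (s n) (hsF n) (s (n + 1)) (hsF (n + 1)) (hshift n)
    exact lt_of_not_ge this
  obtain ⟨x, ⟨n, rfl⟩, hmin⟩ := h.has_min (Set.range fun n => f (s n)) ⟨_, ⟨0, rfl⟩⟩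
  exact hmin _ ⟨n + 1, rfl⟩ (hdesc n)

end Paper
end

section
/- If P and Q are better partial orders, then the product poset P × Q with the componentwise order is a better partial order. -/
namespace Paper

/- ### basic helpers -/

lemma tail_infinite {N : Set ℕ} (hN : N.Infinite) (b : ℕ) :
    {x ∈ N | b < x}.Infinite := by
  have : N \ Set.Iic b ⊆ {x ∈ N | b < x} := by
    intro x hx; exact ⟨hx.1, by simpa using hx.2⟩
  exact (hN.diff (Set.finite_Iic b)).mono this

lemma initSegS_empty (B : Set ℕ) : InitSegS ∅ B := by
  constructor <;> simp

/-- two initial segments (as finsets) of the same set are comparable -/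
lemma initSegS_comparable {u v : Finset ℕ} {Z : Set ℕ}
    (hu : InitSegS u Z) (hv : InitSegS v Z) : InitSegF u v ∨ InitSegF v u := by
  by_cases h : u ⊆ v
  · left
    refine ⟨h, fun a ha b hb hbu => ?_⟩
    exact hu.2 a ha b (hv.1 hb) hbu
  · right
    obtain ⟨a, hau, hav⟩ := Finset.not_subset.mp h
    have hvu : v ⊆ u := by
      intro b hbv
      by_contra hbu
      have h1 : a < b := hu.2 a hau b (hv.1 hbv) hbu
      have h2 : b < a := hv.2 b hbv a (hu.1 hau) hav
      omega
    refine ⟨hvu, fun c hc b hb hbv => ?_⟩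
    exact hv.2 c hc b (hu.1 hb) hbv

lemma initSegF_comparable {u v w : Finset ℕ}
    (hu : InitSegF u w) (hv : InitSegF v w) : InitSegF u v ∨ InitSegF v u := by
  by_cases h : u ⊆ v
  · exact Or.inl ⟨h, fun a ha b hb hbu => hu.2 a ha b (hv.1 hb) hbu⟩
  · obtain ⟨a, hau, hav⟩ := Finset.not_subset.mp h
    have hvu : v ⊆ u := by
      intro b hbv
      by_contra hbu
      have h1 : a < b := hu.2 a hau b (hv.1 hbv) hbu
      have h2 : b < a := hv.2 b hbv a (hu.1 hau) hav
      omega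
    exact Or.inr ⟨hvu, fun c hc b hb hbv => hv.2 c hc b (hu.1 hb) hbv⟩

lemma initSegF_trans {s u w : Finset ℕ} (h1 : InitSegF s u) (h2 : InitSegF u w) :
    InitSegF s w := by
  refine ⟨h1.1.trans h2.1, fun a ha b hb hbs => ?_⟩
  by_cases hbu : b ∈ u
  · exact h1.2 a ha b hbu hbs
  · exact h2.2 a (h1.1 ha) b hb hbu

/- ### combinatorial forcing -/

variable (𝓑 : Set (Finset ℕ))

def Accepts (s : Finset ℕ) (X : Set ℕ) : Prop :=
  ∀ Z : Set ℕ, Z.Infinite → InitSegS s Z → Z \ ↑s ⊆ X → ∃ v ∈ 𝓑, InitSegS v Z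

def Rejects (s : Finset ℕ) (X : Set ℕ) : Prop :=
  ∀ Y : Set ℕ, Y ⊆ X → Y.Infinite → ¬ Accepts 𝓑 s Y

def Decides (s : Finset ℕ) (X : Set ℕ) : Prop :=
  Accepts 𝓑 s X ∨ Rejects 𝓑 s X

variable {𝓑}

lemma accepts_subset {s : Finset ℕ} {X Y : Set ℕ} (hYX : Y ⊆ X)
    (h : Accepts 𝓑 s X) : Accepts 𝓑 s Y :=
  fun Z hZ hs hsub => h Z hZ hs (hsub.trans hYX)

lemma rejects_subset {s : Finset ℕ} {X Y : Set ℕ} (hYX : Y ⊆ X)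
    (h : Rejects 𝓑 s X) : Rejects 𝓑 s Y :=
  fun W hW hWi => h W (hW.trans hYX) hWi

lemma decides_subset {s : Finset ℕ} {X Y : Set ℕ} (hYX : Y ⊆ X)
    (h : Decides 𝓑 s X) : Decides 𝓑 s Y :=
  h.imp (accepts_subset hYX) (rejects_subset hYX)

lemma accepts_of_mem {s : Finset ℕ} (hs : s ∈ 𝓑) (X : Set ℕ) : Accepts 𝓑 s X :=
  fun Z _ hsZ _ => ⟨s, hs, hsZ⟩

/-- acceptance only depends on the part of `X` above `s` -/
lemma accepts_tail {s : Finset ℕ} {X X' : Set ℕ}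
    (h : ∀ x ∈ X', (∀ a ∈ s, a < x) → x ∈ X)
    (hX : Accepts 𝓑 s X) : Accepts 𝓑 s X' := by
  intro Z hZ hs hsub
  refine hX Z hZ hs ?_
  intro z hz
  have hzs : z ∉ s := by simpa using hz.2
  exact h z (hsub hz) (fun a ha => hs.2 a ha z hz.1 hzs)

lemma rejects_tail {s : Finset ℕ} {X X' : Set ℕ}
    (h : ∀ x ∈ X', (∀ a ∈ s, a < x) → x ∈ X)
    (hX : Rejects 𝓑 s X) : Rejects 𝓑 s X' := by
  intro Y hY hYi hacc
  set Y' : Set ℕ := {y ∈ Y | s.sup id < y} with hY'def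
  have hY'i : Y'.Infinite := tail_infinite hYi _
  have hY'X : Y' ⊆ X := by
    intro y hy
    exact h y (hY hy.1) (fun a ha => lt_of_le_of_lt (Finset.le_sup (f := id) ha) hy.2)
  exact hX Y' hY'X hY'i (accepts_subset (fun y hy => hy.1) hacc)

lemma decides_tail {s : Finset ℕ} {X X' : Set ℕ}
    (h : ∀ x ∈ X', (∀ a ∈ s, a < x) → x ∈ X)
    (hX : Decides 𝓑 s X) : Decides 𝓑 s X' :=
  hX.imp (accepts_tail h) (rejects_tail h)

lemma exists_decides (s : Finset ℕ) {X : Set ℕ} (hX : X.Infinite) :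
    ∃ Y, Y ⊆ X ∧ Y.Infinite ∧ Decides 𝓑 s Y := by
  by_cases h : Rejects 𝓑 s X
  · exact ⟨X, subset_rfl, hX, Or.inr h⟩
  · simp only [Rejects, not_forall] at h
    obtain ⟨Y, hYX, hYi, hacc⟩ := h
    exact ⟨Y, hYX, hYi, Or.inl (not_not.mp hacc)⟩

lemma exists_decides_all (L : Finset (Finset ℕ)) {X : Set ℕ} (hX : X.Infinite) :
    ∃ Y, Y ⊆ X ∧ Y.Infinite ∧ ∀ s ∈ L, Decides 𝓑 s Y := by
  classical
  induction L using Finset.induction_on with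
  | empty => exact ⟨X, subset_rfl, hX, by simp⟩
  | insert _ _ hnotmem ih =>
    obtain ⟨Y, hYX, hYi, hY⟩ := ih
    obtain ⟨W, hWY, hWi, hW⟩ := exists_decides (𝓑 := 𝓑) _ hYi
    refine ⟨W, hWY.trans hYX, hWi, ?_⟩
    intro s hs
    rcases Finset.mem_insert.mp hs with rfl | hs
    · exact hW
    · exact decides_subset hWY (hY s hs)

/- ### diagonalization: a set deciding all of its finite subsets -/

variable (𝓑) (M : Set ℕ)

def DInv (p : Set ℕ × Finset ℕ) : Prop :=
  p.1.Infinite ∧ p.1 ⊆ M ∧ (∀ x ∈ p.1, ∀ a ∈ p.2, a < x) ∧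
  (∀ s ∈ p.2.powerset, Decides 𝓑 s p.1)

lemma dstep (p : Set ℕ × Finset ℕ) (hp : DInv 𝓑 M p) :
    ∃ X' : Set ℕ, X' ⊆ p.1 ∧ DInv 𝓑 M (X', insert (sInf p.1) p.2) := by
  classical
  obtain ⟨Y, hY, hYi, hdec⟩ := exists_decides_all (𝓑 := 𝓑)
    (insert (sInf p.1) p.2).powerset (tail_infinite hp.1 (sInf p.1))
  have hYp : Y ⊆ p.1 := fun x hx => (hY hx).1
  refine ⟨Y, hYp, hYi, hYp.trans hp.2.1, ?_, hdec⟩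
  intro x hx a ha
  rcases Finset.mem_insert.mp ha with rfl | ha
  · exact (hY hx).2
  · exact hp.2.2.1 x (hYp hx) a ha

noncomputable def dinit (hM : M.Infinite) : {p : Set ℕ × Finset ℕ // DInv 𝓑 M p} :=
  ⟨((exists_decides_all (𝓑 := 𝓑) {∅} hM).choose, ∅), by
    obtain ⟨h1, h2, h3⟩ := (exists_decides_all (𝓑 := 𝓑) {∅} hM).choose_spec
    refine ⟨h2, h1, by simp, ?_⟩
    intro s hs
    simp only [Finset.powerset_empty, Finset.mem_singleton] at hs
    subst hs
    exact h3 ∅ (by simp)⟩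

noncomputable def dnext (p : {p : Set ℕ × Finset ℕ // DInv 𝓑 M p}) :
    {p : Set ℕ × Finset ℕ // DInv 𝓑 M p} :=
  ⟨((dstep 𝓑 M p.1 p.2).choose, insert (sInf p.1.1) p.1.2),
    (dstep 𝓑 M p.1 p.2).choose_spec.2⟩

lemma dnext_fst_subset (p : {p : Set ℕ × Finset ℕ // DInv 𝓑 M p}) :
    (dnext 𝓑 M p).1.1 ⊆ p.1.1 :=
  (dstep 𝓑 M p.1 p.2).choose_spec.1

lemma dnext_snd (p : {p : Set ℕ × Finset ℕ // DInv 𝓑 M p}) :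
    (dnext 𝓑 M p).1.2 = insert (sInf p.1.1) p.1.2 := rfl

lemma exists_deciding_set (hM : M.Infinite) :
    ∃ N, N ⊆ M ∧ N.Infinite ∧ ∀ s : Finset ℕ, ↑s ⊆ N → Decides 𝓑 s N := by
  classical
  set c : ℕ → {p : Set ℕ × Finset ℕ // DInv 𝓑 M p} :=
    fun k => (dnext 𝓑 M)^[k] (dinit 𝓑 M hM) with hc
  have hsucc : ∀ k, c (k + 1) = dnext 𝓑 M (c k) := fun k => by
    simp only [hc, Function.iterate_succ_apply']
  set X : ℕ → Set ℕ := fun k => (c k).1.1 with hX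
  set Fs : ℕ → Finset ℕ := fun k => (c k).1.2 with hFs
  set n : ℕ → ℕ := fun k => sInf (X k) with hn
  have hXinf : ∀ k, (X k).Infinite := fun k => (c k).2.1
  have hXM : ∀ k, X k ⊆ M := fun k => (c k).2.2.1
  have hgt : ∀ k, ∀ x ∈ X k, ∀ a ∈ Fs k, a < x := fun k => (c k).2.2.2.1
  have hdec : ∀ k, ∀ s ∈ (Fs k).powerset, Decides 𝓑 s (X k) := fun k => (c k).2.2.2.2
  have hXsub : ∀ k, X (k + 1) ⊆ X k := by
    intro k
    have : X (k + 1) = (dnext 𝓑 M (c k)).1.1 := by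
      show ((c (k + 1) : {p : Set ℕ × Finset ℕ // DInv 𝓑 M p}) : Set ℕ × Finset ℕ).1 = _
      rw [hsucc k]
    rw [this]
    exact dnext_fst_subset 𝓑 M (c k)
  have hFsucc : ∀ k, Fs (k + 1) = insert (n k) (Fs k) := by
    intro k
    have : Fs (k + 1) = (dnext 𝓑 M (c k)).1.2 := by
      show ((c (k + 1) : {p : Set ℕ × Finset ℕ // DInv 𝓑 M p}) : Set ℕ × Finset ℕ).2 = _
      rw [hsucc k]
    rw [this, dnext_snd]
  have hXle : ∀ k l, k ≤ l → X l ⊆ X k := by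
    intro k l hkl
    induction l, hkl using Nat.le_induction with
    | base => exact subset_rfl
    | succ l hkl ih => exact (hXsub l).trans ih
  have hnmem : ∀ k, n k ∈ X k := fun k => Nat.sInf_mem (hXinf k).nonempty
  have hmono : StrictMono n := by
    apply strictMono_nat_of_lt_succ
    intro k
    exact hgt (k + 1) (n (k + 1)) (hnmem (k + 1)) (n k) (by rw [hFsucc k]; simp)
  have hF0 : Fs 0 = ∅ := rfl
  have hmemF : ∀ k a, a ∈ Fs k ↔ ∃ j, j < k ∧ a = n j := by
    intro k
    induction k with
    | zero => simp [hF0]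
    | succ k ih =>
      intro a
      rw [hFsucc k]
      simp only [Finset.mem_insert, ih]
      constructor
      · rintro (rfl | ⟨j, hj, rfl⟩)
        · exact ⟨k, by omega, rfl⟩
        · exact ⟨j, by omega, rfl⟩
      · rintro ⟨j, hj, rfl⟩
        rcases Nat.lt_succ_iff_lt_or_eq.mp hj with hj | rfl
        · exact Or.inr ⟨j, hj, rfl⟩
        · exact Or.inl rfl
  refine ⟨Set.range n, ?_, Set.infinite_range_of_injective hmono.injective, ?_⟩
  · rintro x ⟨k, rfl⟩
    exact hXM k (hnmem k)
  · intro s hs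
    have hNX0 : Set.range n ⊆ X 0 := by
      rintro x ⟨k, rfl⟩
      exact hXle 0 k (Nat.zero_le k) (hnmem k)
    rcases s.eq_empty_or_nonempty with rfl | hne
    · exact decides_subset hNX0 (hdec 0 ∅ (by simp))
    · obtain ⟨k, hk⟩ := hs (s.max'_mem hne)
      have hsF : s ⊆ Fs (k + 1) := by
        intro a ha
        obtain ⟨j, hj⟩ := hs ha
        have : n j ≤ n k := by rw [hj, hk]; exact s.le_max' a ha
        rw [hmemF]
        exact ⟨j, by have := hmono.le_iff_le.mp this; omega, hj.symm⟩
      have hds : Decides 𝓑 s (X (k + 1)) := hdec (k + 1) s (Finset.mem_powerset.mpr hsF)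
      refine decides_tail ?_ hds
      rintro x ⟨j, rfl⟩ hlt
      have : n k < n j := by rw [hk]; exact hlt _ (s.max'_mem hne)
      exact hXle (k + 1) j (by have := hmono.lt_iff_lt.mp this; omega) (hnmem j)

/- ### the extension claim -/

lemma bad_ext_finite {s : Finset ℕ} {N : Set ℕ}
    (hrej : Rejects 𝓑 s N) :
    {m | m ∈ N ∧ (∀ a ∈ s, a < m) ∧ Accepts 𝓑 (insert m s) N}.Finite := by
  classical
  by_contra h
  have h : Set.Infinite {m | m ∈ N ∧ (∀ a ∈ s, a < m) ∧ Accepts 𝓑 (insert m s) N} := h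
  set Y : Set ℕ := {m | m ∈ N ∧ (∀ a ∈ s, a < m) ∧ Accepts 𝓑 (insert m s) N} with hYdef
  have hYN : Y ⊆ N := fun y hy => hy.1
  refine hrej Y hYN h ?_
  intro Z hZ hsZ hsub
  have hZs : (Z \ ↑s).Infinite := hZ.diff s.finite_toSet
  set m := sInf (Z \ ↑s) with hmdef
  have hm : m ∈ Z \ ↑s := Nat.sInf_mem hZs.nonempty
  have hmY : m ∈ Y := hsub hm
  refine hmY.2.2 Z hZ ⟨?_, ?_⟩ ?_
  · intro x hx
    simp only [Finset.coe_insert, Set.mem_insert_iff] at hx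
    rcases hx with rfl | hx
    · exact hm.1
    · exact hsZ.1 hx
  · intro a ha b hb hbs
    rcases Finset.mem_insert.mp ha with rfl | ha
    · have hb' : b ∈ Z \ ↑s := ⟨hb, fun hbs' => hbs (Finset.mem_insert_of_mem hbs')⟩
      have : m ≤ b := Nat.sInf_le hb'
      have : b ≠ m := fun he => hbs (he ▸ Finset.mem_insert_self _ _)
      omega
    · exact hsZ.2 a ha b hb (fun hbs' => hbs (Finset.mem_insert_of_mem hbs'))
  · intro z hz
    exact hYN (hsub ⟨hz.1, fun hzs => hz.2 (by simpa using Or.inr hzs)⟩)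

/- ### second diagonalization -/

def RInv (N : Set ℕ) (G : Finset ℕ) : Prop :=
  ↑G ⊆ N ∧ ∀ s ⊆ G, Rejects 𝓑 s N

lemma rstep {N : Set ℕ} (hN : N.Infinite)
    (hdecall : ∀ s : Finset ℕ, ↑s ⊆ N → Decides 𝓑 s N)
    {G : Finset ℕ} (hG : RInv 𝓑 N G) :
    ∃ m, m ∈ N ∧ (∀ a ∈ G, a < m) ∧ RInv 𝓑 N (insert m G) := by
  classical
  set Bad : Set ℕ :=
    ⋃ s ∈ G.powerset, {m | m ∈ N ∧ (∀ a ∈ s, a < m) ∧ Accepts 𝓑 (insert m s) N} with hBad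
  have hBadfin : Bad.Finite :=
    Set.Finite.biUnion G.powerset.finite_toSet
      (fun s hs => bad_ext_finite (hrej := hG.2 s (Finset.mem_powerset.mp (by simpa using hs))))
  have hinf : (N \ (Bad ∪ Set.Iic (G.sup id))).Infinite :=
    hN.diff (hBadfin.union (Set.finite_Iic _))
  obtain ⟨m, hmN, hmno⟩ := hinf.nonempty
  rw [Set.mem_union, not_or] at hmno
  have hgt : ∀ a ∈ G, a < m := by
    intro a ha
    have h1 : a ≤ G.sup id := Finset.le_sup (f := id) ha
    have h2 : ¬ m ≤ G.sup id := by simpa using hmno.2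
    omega
  refine ⟨m, hmN, hgt, ?_, ?_⟩
  · intro x hx
    rcases Finset.mem_insert.mp (by simpa using hx) with rfl | hx
    · exact hmN
    · exact hG.1 hx
  · intro s hs
    by_cases hms : m ∈ s
    · have hse : s.erase m ⊆ G := by
        intro a ha
        have := hs (Finset.mem_of_mem_erase ha)
        rcases Finset.mem_insert.mp this with rfl | h
        · exact absurd (Finset.ne_of_mem_erase ha) (by simp)
        · exact h
      have hrw : s = insert m (s.erase m) := (Finset.insert_erase hms).symm
      have hnacc : ¬ Accepts 𝓑 (insert m (s.erase m)) N := by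
        intro hacc
        refine hmno.1 ?_
        rw [hBad]
        refine Set.mem_biUnion (Finset.mem_coe.mpr (Finset.mem_powerset.mpr hse)) ?_
        exact ⟨hmN, fun a ha => hgt a (hse ha), hacc⟩
      have hsubN : ↑(insert m (s.erase m)) ⊆ N := by
        intro x hx
        rcases Finset.mem_insert.mp (Finset.mem_coe.mp hx) with rfl | hx'
        · exact hmN
        · exact hG.1 (hse hx')
      rcases hdecall _ hsubN with hacc | hrej
      · exact absurd hacc hnacc
      · rw [hrw]; exact hrej
    · have : s ⊆ G := by
        intro a ha
        rcases Finset.mem_insert.mp (hs ha) with rfl | h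
        · exact absurd ha hms
        · exact h
      exact hG.2 s this

noncomputable def rnext {N : Set ℕ} (hN : N.Infinite)
    (hdecall : ∀ s : Finset ℕ, ↑s ⊆ N → Decides 𝓑 s N)
    (G : {G : Finset ℕ // RInv 𝓑 N G}) : {G : Finset ℕ // RInv 𝓑 N G} :=
  ⟨insert (rstep 𝓑 hN hdecall G.2).choose G.1,
    (rstep 𝓑 hN hdecall G.2).choose_spec.2.2⟩

lemma exists_bound {G : ℕ → Finset ℕ} (hmono : Monotone G) (s : Finset ℕ)
    (h : ∀ x ∈ s, ∃ k, x ∈ G k) : ∃ k, s ⊆ G k := by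
  classical
  induction s using Finset.induction_on with
  | empty => exact ⟨0, by simp⟩
  | @insert a t hat ih =>
    obtain ⟨k, hk⟩ := ih (fun x hx => h x (Finset.mem_insert_of_mem hx))
    obtain ⟨l, hl⟩ := h a (Finset.mem_insert_self a t)
    refine ⟨max k l, ?_⟩
    intro x hx
    rcases Finset.mem_insert.mp hx with rfl | hx
    · exact hmono (le_max_right k l) hl
    · exact hmono (le_max_left k l) (hk hx)

lemma exists_rejecting_set {N : Set ℕ} (hN : N.Infinite)
    (hdecall : ∀ s : Finset ℕ, ↑s ⊆ N → Decides 𝓑 s N)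
    (hrej0 : Rejects 𝓑 ∅ N) :
    ∃ N₂ : Set ℕ, N₂ ⊆ N ∧ N₂.Infinite ∧ ∀ s : Finset ℕ, ↑s ⊆ N₂ → Rejects 𝓑 s N := by
  classical
  have base : RInv 𝓑 N (∅ : Finset ℕ) := by
    refine ⟨by simp, ?_⟩
    intro s hs
    rw [Finset.subset_empty.mp hs]
    exact hrej0
  set c : ℕ → {G : Finset ℕ // RInv 𝓑 N G} :=
    fun k => (rnext 𝓑 hN hdecall)^[k] ⟨∅, base⟩ with hc
  have hsucc : ∀ k, c (k + 1) = rnext 𝓑 hN hdecall (c k) := fun k => by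
    simp only [hc, Function.iterate_succ_apply']
  set G : ℕ → Finset ℕ := fun k => (c k).1 with hG
  have hGsucc : ∀ k, ∃ m, m ∈ N ∧ (∀ a ∈ G k, a < m) ∧ G (k + 1) = insert m (G k) := by
    intro k
    refine ⟨(rstep 𝓑 hN hdecall (c k).2).choose,
      (rstep 𝓑 hN hdecall (c k).2).choose_spec.1,
      (rstep 𝓑 hN hdecall (c k).2).choose_spec.2.1, ?_⟩
    show ((c (k + 1) : {G : Finset ℕ // RInv 𝓑 N G}) : Finset ℕ) = _
    rw [hsucc k]
    rfl
  have hGmono : Monotone G := by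
    apply monotone_nat_of_le_succ
    intro k
    obtain ⟨m, _, _, he⟩ := hGsucc k
    rw [he]
    exact Finset.subset_insert _ _
  have hGcard : ∀ k, (G k).card = k := by
    intro k
    induction k with
    | zero => rfl
    | succ k ih =>
      obtain ⟨m, _, hgt, he⟩ := hGsucc k
      have hm : m ∉ G k := fun h => absurd (hgt m h) (lt_irrefl m)
      rw [he, Finset.card_insert_of_notMem hm, ih]
  set N₂ : Set ℕ := {x | ∃ k, x ∈ G k} with hN₂
  have hN₂N : N₂ ⊆ N := by
    rintro x ⟨k, hk⟩
    exact (c k).2.1 hk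
  have hN₂inf : N₂.Infinite := by
    intro hfin
    have hsub : G (hfin.toFinset.card + 1) ⊆ hfin.toFinset := by
      intro x hx
      rw [Set.Finite.mem_toFinset]
      exact ⟨_, hx⟩
    have := Finset.card_le_card hsub
    rw [hGcard] at this
    omega
  refine ⟨N₂, hN₂N, hN₂inf, ?_⟩
  intro s hs
  have : ∀ x ∈ s, ∃ k, x ∈ G k := fun x hx => hs hx
  obtain ⟨k, hk⟩ := exists_bound hGmono s this
  exact (c k).2.2 s hk

/- ### Galvin's lemma -/

theorem galvin (𝓑 : Set (Finset ℕ)) {M : Set ℕ} (hM : M.Infinite) :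
    ∃ N : Set ℕ, N ⊆ M ∧ N.Infinite ∧
      ((∀ u ∈ 𝓑, ¬ ↑u ⊆ N) ∨
       (∀ Z : Set ℕ, Z ⊆ N → Z.Infinite → ∃ v ∈ 𝓑, InitSegS v Z)) := by
  obtain ⟨N, hNM, hNi, hdec⟩ := exists_deciding_set 𝓑 M hM
  rcases hdec ∅ (by simp) with hacc | hrej
  · refine ⟨N, hNM, hNi, Or.inr ?_⟩
    intro Z hZN hZi
    exact hacc Z hZi (initSegS_empty Z) (by simpa using hZN)
  · obtain ⟨N₂, hN₂N, hN₂i, hN₂⟩ := exists_rejecting_set 𝓑 hNi hdec hrej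
    refine ⟨N₂, hN₂N.trans hNM, hN₂i, Or.inl ?_⟩
    intro u hu hsub
    exact hN₂ u hsub N subset_rfl hNi (accepts_of_mem hu N)

/- ### Nash–Williams partition theorem for thin families -/

theorem nash_williams {F F₀ : Set (Finset ℕ)}
    (hthin : ∀ s ∈ F, ∀ t ∈ F, InitSegF s t → s = t)
    (hsub : F₀ ⊆ F) {M : Set ℕ} (hM : M.Infinite) :
    ∃ N : Set ℕ, N ⊆ M ∧ N.Infinite ∧
      ((∀ u ∈ F, ↑u ⊆ N → u ∈ F₀) ∨ (∀ u ∈ F₀, ¬ ↑u ⊆ N)) := by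
  obtain ⟨N, hNM, hNi, h⟩ := galvin F₀ hM
  rcases h with h | h
  · exact ⟨N, hNM, hNi, Or.inr h⟩
  · refine ⟨N, hNM, hNi, Or.inl ?_⟩
    intro u hu hsubN
    set Z : Set ℕ := ↑u ∪ {x ∈ N | ∀ a ∈ u, a < x} with hZdef
    have hZN : Z ⊆ N := by
      rintro x (hx | hx)
      · exact hsubN hx
      · exact hx.1
    have hZi : Z.Infinite := by
      refine ((tail_infinite hNi (u.sup id)).mono ?_).mono Set.subset_union_right
      intro x hx
      exact ⟨hx.1, fun a ha => lt_of_le_of_lt (Finset.le_sup (f := id) ha) hx.2⟩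
    obtain ⟨v, hv, hvZ⟩ := h Z hZN hZi
    have huZ : InitSegS u Z := by
      refine ⟨Set.subset_union_left, ?_⟩
      intro a ha b hb hbu
      rcases hb with hb | hb
      · exact absurd (Finset.mem_coe.mp hb) hbu
      · exact hb.2 a ha
    rcases initSegS_comparable huZ hvZ with hc | hc
    · exact hthin u hu v (hsub hv) hc ▸ hv
    · rw [hthin v (hsub hv) u hu hc] at hv
      exact hv

/- ### shift decompositions -/

lemma shift_decomp {s t : Finset ℕ} (hst : Shift s t) (hsne : s.Nonempty) :
    ∃ m, m ∈ s ∧ (∀ x ∈ s ∪ t, m ≤ x) ∧ m ∉ t ∧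
      InitSegF s (s ∪ t) ∧ InitSegF t ((s ∪ t).erase m) := by
  obtain ⟨B, hBinf, hs, ht⟩ := hst
  set m := sInf B with hm
  have hmB : m ∈ B := Nat.sInf_mem hBinf.nonempty
  have hms : m ∈ s := by
    by_contra hns
    obtain ⟨a, ha⟩ := hsne
    have h1 : a < m := hs.2 a ha m hmB hns
    have h2 : m ≤ a := Nat.sInf_le (hs.1 ha)
    omega
  have hmt : m ∉ t := fun h => (ht.1 h).2 rfl
  have hle : ∀ x ∈ s ∪ t, m ≤ x := by
    intro x hx
    rcases Finset.mem_union.mp hx with hx | hx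
    · exact Nat.sInf_le (hs.1 hx)
    · exact Nat.sInf_le (ht.1 hx).1
  refine ⟨m, hms, hle, hmt, ⟨Finset.subset_union_left, ?_⟩, ⟨?_, ?_⟩⟩
  · intro a ha b hb hbs
    have hbt : b ∈ t := (Finset.mem_union.mp hb).resolve_left hbs
    exact hs.2 a ha b (ht.1 hbt).1 hbs
  · intro x hx
    exact Finset.mem_erase.mpr ⟨fun h => hmt (h ▸ hx), Finset.mem_union_right s hx⟩
  · intro a ha b hb hbt
    have hb' := Finset.mem_erase.mp hb
    have hbs : b ∈ s := (Finset.mem_union.mp hb'.2).resolve_right hbt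
    exact ht.2 a ha b ⟨hs.1 hbs, hb'.1⟩ hbt

lemma initSegF_erase {u u' : Finset ℕ} (m : ℕ) (h : InitSegF u u') :
    InitSegF (u.erase m) (u'.erase m) := by
  refine ⟨Finset.erase_subset_erase m h.1, ?_⟩
  intro a ha b hb hbe
  have ha' := Finset.mem_erase.mp ha
  have hb' := Finset.mem_erase.mp hb
  have hbu : b ∉ u := fun hbu => hbe (Finset.mem_erase.mpr ⟨hb'.1, hbu⟩)
  exact h.2 a ha'.2 b hb'.2 hbu

lemma decomp_unique {F : Set (Finset ℕ)}
    (hthin : ∀ s ∈ F, ∀ t ∈ F, InitSegF s t → s = t) (hne : ∅ ∉ F)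
    {s t s' t' : Finset ℕ} (hs : s ∈ F) (ht : t ∈ F) (hs' : s' ∈ F) (ht' : t' ∈ F)
    (h1 : Shift s t) (h2 : Shift s' t') (he : s ∪ t = s' ∪ t') :
    s = s' ∧ t = t' := by
  have hsne : s.Nonempty := Finset.nonempty_iff_ne_empty.mpr (fun h => hne (h ▸ hs))
  have hsne' : s'.Nonempty := Finset.nonempty_iff_ne_empty.mpr (fun h => hne (h ▸ hs'))
  obtain ⟨m, hms, hle, hmt, hsI, htI⟩ := shift_decomp h1 hsne
  obtain ⟨m', hms', hle', hmt', hsI', htI'⟩ := shift_decomp h2 hsne'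
  rw [← he] at hsI' htI' hle'
  have hss' : s = s' := by
    rcases initSegF_comparable hsI hsI' with hc | hc
    · exact hthin s hs s' hs' hc
    · exact (hthin s' hs' s hs hc).symm
  have hmm' : m = m' := by
    have h1 : m' ≤ m := hle' m (Finset.mem_union_left t hms)
    have h2 : m ≤ m' := hle m' (Finset.mem_union_left t (hss' ▸ hms'))
    omega
  rw [← hmm'] at htI'
  have htt' : t = t' := by
    rcases initSegF_comparable htI htI' with hc | hc
    · exact hthin t ht t' ht' hc
    · exact (hthin t' ht' t ht hc).symm
  exact ⟨hss', htt'⟩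

/- ### restriction of a front to an infinite subset -/

lemma front_restrict {F : Set (Finset ℕ)} {A N : Set ℕ}
    (hcover : (⋃ s ∈ F, (↑s : Set ℕ)) = A)
    (hthin : ∀ s ∈ F, ∀ t ∈ F, InitSegF s t → s = t)
    (hexu : ∀ B : Set ℕ, B ⊆ A → B.Infinite → ∃! s, s ∈ F ∧ InitSegS s B)
    (hne : ∅ ∉ F) (hNA : N ⊆ A) (hNi : N.Infinite) :
    IsFront {s ∈ F | ↑s ⊆ N} N := by
  refine ⟨hNi, Or.inr ?_, ?_, ?_⟩
  · apply Set.eq_of_subset_of_subset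
    · intro x hx
      simp only [Set.mem_iUnion] at hx
      obtain ⟨s, hs, hx⟩ := hx
      exact hs.2 hx
    · intro x hx
      set C : Set ℕ := {y ∈ N | x ≤ y} with hC
      have hCN : C ⊆ N := fun y hy => hy.1
      have hCi : C.Infinite := by
        refine (tail_infinite hNi x).mono ?_
        intro y hy
        exact ⟨hy.1, le_of_lt hy.2⟩
      obtain ⟨s, ⟨hsF, hsC⟩, _⟩ := hexu C (hCN.trans hNA) hCi
      have hsne : s.Nonempty := Finset.nonempty_iff_ne_empty.mpr
        (fun h => hne (h ▸ hsF))
      have hxs : x ∈ s := by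
        by_contra hxs
        obtain ⟨a, ha⟩ := hsne
        have h1 : a < x := hsC.2 a ha x ⟨hx, le_refl x⟩ hxs
        have h2 : x ≤ a := (hsC.1 ha).2
        omega
      simp only [Set.mem_iUnion]
      exact ⟨s, ⟨hsF, (hsC.1).trans hCN⟩, hxs⟩
  · intro s hs t ht hI
    exact hthin s hs.1 t ht.1 hI
  · intro B hBN hBi
    obtain ⟨s, ⟨hsF, hsB⟩, huniq⟩ := hexu B (hBN.trans hNA) hBi
    refine ⟨s, ⟨⟨hsF, hsB.1.trans hBN⟩, hsB⟩, ?_⟩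
    rintro s' ⟨⟨hs'F, _⟩, hs'B⟩
    exact huniq s' ⟨hs'F, hs'B⟩


/-- The product of two better partial orders, with the componentwise order,
is a better partial order. -/
theorem stmt_9 {P Q : Type*} [PartialOrder P] [PartialOrder Q]
    (hP : IsBpo ((· ≤ ·) : P → P → Prop))
    (hQ : IsBpo ((· ≤ ·) : Q → Q → Prop)) :
    IsBpo ((· ≤ ·) : P × Q → P × Q → Prop) := by
  rintro ⟨A, F, f, ⟨hAinf, hcover, hthin, hexu⟩, hBad⟩
  have hShift00 : Shift ∅ ∅ := ⟨A, hAinf, initSegS_empty _, initSegS_empty _⟩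
  have hne : ∅ ∉ F := fun h => hBad ∅ h ∅ h hShift00 (le_refl _)
  have hcover' : (⋃ s ∈ F, (↑s : Set ℕ)) = A := by
    rcases hcover with h | h
    · exact absurd (h ▸ rfl : (∅ : Finset ℕ) ∈ F) hne
    · exact h
  set D : Finset ℕ → Finset ℕ → Finset ℕ → Prop :=
    fun u s t => s ∈ F ∧ t ∈ F ∧ Shift s t ∧ u = s ∪ t with hD
  set F2 : Set (Finset ℕ) := {u | ∃ s t, D u s t} with hF2
  set F0 : Set (Finset ℕ) := {u ∈ F2 | ∀ s t, D u s t → (f s).1 ≤ (f t).1} with hF0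
  -- F2 is thin
  have hF2thin : ∀ u ∈ F2, ∀ u' ∈ F2, InitSegF u u' → u = u' := by
    rintro u ⟨s, t, hsF, htF, hst, rfl⟩ u' ⟨s', t', hs'F, ht'F, hst', rfl⟩ hI
    have hsne : s.Nonempty := Finset.nonempty_iff_ne_empty.mpr (fun h => hne (h ▸ hsF))
    have hsne' : s'.Nonempty := Finset.nonempty_iff_ne_empty.mpr (fun h => hne (h ▸ hs'F))
    obtain ⟨m, hms, hle, hmt, hsI, htI⟩ := shift_decomp hst hsne
    obtain ⟨m', hms', hle', hmt', hsI', htI'⟩ := shift_decomp hst' hsne'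
    have hsu' : InitSegF s (s' ∪ t') := initSegF_trans hsI hI
    have hss' : s = s' := by
      rcases initSegF_comparable hsu' hsI' with hc | hc
      · exact hthin s hsF s' hs'F hc
      · exact (hthin s' hs'F s hsF hc).symm
    have hmm' : m = m' := by
      have h1 : m' ≤ m := hle' m (hI.1 (Finset.mem_union_left t hms))
      have h2 : m ≤ m' := le_trans (hle m' (Finset.mem_union_left t (hss' ▸ hms')))
        (le_refl m')
      omega
    have htu' : InitSegF t ((s' ∪ t').erase m') :=
      initSegF_trans htI (hmm' ▸ initSegF_erase m hI)
    have htt' : t = t' := by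
      rcases initSegF_comparable htu' htI' with hc | hc
      · exact hthin t htF t' ht'F hc
      · exact (hthin t' ht'F t htF hc).symm
    rw [hss', htt']
  have hF0sub : F0 ⊆ F2 := fun u hu => hu.1
  obtain ⟨N, hNA, hNi, hcase⟩ := nash_williams hF2thin hF0sub hAinf
  have hFront : IsFront {s ∈ F | ↑s ⊆ N} N :=
    front_restrict hcover' hthin hexu hne hNA hNi
  rcases hcase with hall | hnone
  · -- every u ∈ F2 inside N is in F0 : second components form a bad sequence
    refine hQ ⟨N, {s ∈ F | ↑s ⊆ N}, fun s => (f s).2, hFront, ?_⟩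
    rintro s ⟨hsF, hsN⟩ t ⟨htF, htN⟩ hst
    have hDu : D (s ∪ t) s t := ⟨hsF, htF, hst, rfl⟩
    have huN : ↑(s ∪ t) ⊆ N := by
      rw [Finset.coe_union]
      exact Set.union_subset hsN htN
    have hu0 : (s ∪ t) ∈ F0 := hall (s ∪ t) ⟨s, t, hDu⟩ huN
    have hg : (f s).1 ≤ (f t).1 := hu0.2 s t hDu
    have hnb : ¬ (f s ≤ f t) := hBad s hsF t htF hst
    intro hh
    exact hnb ⟨hg, hh⟩
  · -- no u ∈ F0 inside N : first components form a bad sequence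
    refine hP ⟨N, {s ∈ F | ↑s ⊆ N}, fun s => (f s).1, hFront, ?_⟩
    rintro s ⟨hsF, hsN⟩ t ⟨htF, htN⟩ hst
    have hDu : D (s ∪ t) s t := ⟨hsF, htF, hst, rfl⟩
    have huN : ↑(s ∪ t) ⊆ N := by
      rw [Finset.coe_union]
      exact Set.union_subset hsN htN
    have hu2 : (s ∪ t) ∈ F2 := ⟨s, t, hDu⟩
    have hu0 : (s ∪ t) ∉ F0 := fun h => hnone _ h huN
    intro hg
    apply hu0
    refine ⟨hu2, ?_⟩
    rintro s' t' ⟨hs'F, ht'F, hst', he⟩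
    obtain ⟨h1, h2⟩ := decomp_unique hthin hne hsF htF hs'F ht'F hst hst' he
    rw [← h1, ← h2]
    exact hg


end Paper
end

section
/- For positive integers n ≤ m, the n-comb order-embeds into the m-comb, and for n < m the m-comb does not order-embed into the n-comb. -/
namespace Paper

/-- A finite relational structure (finite set with a binary relation `le`). -/
structure FinOrd : Type 1 where
  carrier : Type
  fin : Finite carrier
  le : carrier → carrier → Prop

/-- `X` is a partial order. -/
def FinOrd.IsPO (X : FinOrd) : Prop :=
  (∀ a, X.le a a) ∧ (∀ a b c, X.le a b → X.le b c → X.le a c) ∧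
  (∀ a b, X.le a b → X.le b a → a = b)

/-- `X` is a co-tree: a poset with a greatest element whose principal upsets are chains. -/
def FinOrd.IsCoTree (X : FinOrd) : Prop :=
  X.IsPO ∧ (∃ t, ∀ a, X.le a t) ∧
  (∀ a b c, X.le a b → X.le a c → X.le b c ∨ X.le c b)

/-- The order of the `n`-comb: `inl i` is the spine point `c_{i+1}`,
`inr i` is the tooth `c_{i+1}'`. -/
def combLE (n : ℕ) : Fin n ⊕ Fin n → Fin n ⊕ Fin n → Prop
  | Sum.inl i, Sum.inl j => i ≤ j
  | Sum.inr i, Sum.inl j => i ≤ j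
  | Sum.inr i, Sum.inr j => i = j
  | Sum.inl _, Sum.inr _ => False

/-- The `n`-comb. -/
def comb (n : ℕ) : FinOrd := ⟨Fin n ⊕ Fin n, inferInstance, combLE n⟩

/-- `C` order-embeds into `X`. -/
def Embeds (C X : FinOrd) : Prop :=
  ∃ f : C.carrier → X.carrier, Function.Injective f ∧
    ∀ a b, C.le a b ↔ X.le (f a) (f b)

/-- `C` order-embeds into the subset `S` of `X`. -/
def EmbedsIn (C X : FinOrd) (S : Set X.carrier) : Prop :=
  ∃ f : C.carrier → X.carrier, Function.Injective f ∧ (∀ a, f a ∈ S) ∧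
    ∀ a b, C.le a b ↔ X.le (f a) (f b)

/-- Order isomorphism of `FinOrd`s. -/
def Iso (X Y : FinOrd) : Prop :=
  ∃ f : X.carrier ≃ Y.carrier, ∀ a b, X.le a b ↔ Y.le (f a) (f b)

/-- The order of `τ(m,k)`: `inl i` is `x_i` (so `x_0 > x_1 > ⋯ > x_m`), and
`inr i` is the minimal point `y_i` lying below every `x_j`. -/
def tauLE (m k : ℕ) : Fin (m+1) ⊕ Fin (k+1) → Fin (m+1) ⊕ Fin (k+1) → Prop
  | Sum.inl i, Sum.inl j => j ≤ i
  | Sum.inr _, Sum.inl _ => True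
  | Sum.inr i, Sum.inr j => i = j
  | Sum.inl _, Sum.inr _ => False

/-- The co-tree `τ(m,k)`: a chain `x_0 > ⋯ > x_m` with `k+1` pairwise incomparable
minimal points `y_0, …, y_k` immediately below `x_m`. -/
def tau (m k : ℕ) : FinOrd := ⟨Fin (m+1) ⊕ Fin (k+1), inferInstance, tauLE m k⟩

/-- `f : X → Y` is a bi-p-morphism. -/
def IsBiPMorphism (X Y : FinOrd) (f : X.carrier → Y.carrier) : Prop :=
  (∀ a b, X.le a b → Y.le (f a) (f b)) ∧
  (∀ a y, Y.le (f a) y → ∃ z, X.le a z ∧ f z = y) ∧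
  (∀ a y, Y.le y (f a) → ∃ z, X.le z a ∧ f z = y)

/-- `Y ≤ₚ X`: `Y` is a bi-p-morphic image of `X`. -/
def PImage (Y X : FinOrd) : Prop :=
  ∃ f : X.carrier → Y.carrier, Function.Surjective f ∧ IsBiPMorphism X Y f

/-- `x` is an immediate predecessor of `z` in `X`. -/
def ImmPred (X : FinOrd) (x z : X.carrier) : Prop :=
  X.le x z ∧ x ≠ z ∧ ∀ w, X.le x w → X.le w z → w = x ∨ w = z


/-- For positive `n ≤ m` the `n`-comb order-embeds into the `m`-comb, and for
`n < m` the `m`-comb does not order-embed into the `n`-comb. -/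
theorem stmt_12 (n m : ℕ) (hn : 1 ≤ n) :
    (n ≤ m → Embeds (comb n) (comb m)) ∧
    (n < m → ¬ Embeds (comb m) (comb n)) := by
  constructor
  · intro h
    refine ⟨Sum.map (Fin.castLE h) (Fin.castLE h), ?_, ?_⟩
    · exact Function.Injective.sumMap (Fin.castLE_injective h) (Fin.castLE_injective h)
    · rintro (a | a) (b | b) <;>
        simp only [comb, Sum.map, Sum.elim_inl, Sum.elim_inr, Function.comp, combLE, Fin.le_def, Fin.castLE, Fin.ext_iff]
  · intro h ⟨f, hf, _⟩
    have : Fintype.card (Fin m ⊕ Fin m) ≤ Fintype.card (Fin n ⊕ Fin n) :=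
      Fintype.card_le_of_injective f hf
    simp only [Fintype.card_sum, Fintype.card_fin] at this
    omega

end Paper
end

section
/- Let n ≥ 1. A finite co-tree X admits no order embedding of the (n+1)-comb if and only if X decomposes as a chain x_0 > x_1 > ... > x_m together with principal downsets ↓y_0, ..., ↓y_k where {y_0,...,y_k} is the set of immediate predecessors of x_m, x_m is the greatest element with more than one immediate predecessor (or the minimum if X is a chain), and each co-tree ↓y_i admits no order embedding of the n-comb. -/
namespace Paper

/-- `z` has more than one immediate predecessor in `X`. -/
def TwoPreds (X : FinOrd) (z : X.carrier) : Prop :=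
  ∃ w w', w ≠ w' ∧ ImmPred X w z ∧ ImmPred X w' z

lemma enum_chain (X : FinOrd) (hpo : X.IsPO) (S : Set X.carrier)
    (hchain : ∀ a ∈ S, ∀ b ∈ S, X.le a b ∨ X.le b a) (hne : S.Nonempty) :
    ∃ (m : ℕ) (x : Fin (m+1) → X.carrier),
      (∀ i j, X.le (x i) (x j) ↔ j ≤ i) ∧ (∀ i, x i ∈ S) ∧ (∀ a ∈ S, ∃ i, a = x i) := by
  obtain ⟨hrefl, htrans, hanti⟩ := hpo
  have hfin : Finite X.carrier := X.fin
  letI : LinearOrder S := {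
    le := fun a b => X.le b.1 a.1
    lt := fun a b => X.le b.1 a.1 ∧ ¬ X.le a.1 b.1
    lt_iff_le_not_ge := fun a b => Iff.rfl
    le_refl := fun a => hrefl a.1
    le_trans := fun a b c h1 h2 => htrans _ _ _ h2 h1
    le_antisymm := fun a b h1 h2 => Subtype.ext (hanti _ _ h2 h1)
    le_total := fun a b => (hchain b.1 b.2 a.1 a.2)
    toDecidableLE := fun a b => Classical.dec _ }
  haveI : Fintype S := Fintype.ofFinite _
  have hcpos : 0 < Fintype.card S := Fintype.card_pos_iff.mpr hne.to_subtype
  obtain ⟨m, hm⟩ : ∃ m, Fintype.card S = m + 1 := ⟨_, (Nat.succ_pred_eq_of_pos hcpos).symm⟩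
  let e := monoEquivOfFin S hm
  refine ⟨m, fun i => (e i).1, ?_, fun i => (e i).2, ?_⟩
  · intro i j
    exact e.le_iff_le (x := j) (y := i)
  · intro a ha
    exact ⟨e.symm ⟨a, ha⟩, by simp⟩

lemma chain_greatest (X : FinOrd) (hpo : X.IsPO) (S : Set X.carrier)
    (hchain : ∀ a ∈ S, ∀ b ∈ S, X.le a b ∨ X.le b a) (hne : S.Nonempty) :
    ∃ g ∈ S, ∀ s ∈ S, X.le s g := by
  obtain ⟨m, x, h1, h2, h3⟩ := enum_chain X hpo S hchain hne
  refine ⟨x 0, h2 0, fun s hs => ?_⟩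
  obtain ⟨i, rfl⟩ := h3 s hs
  exact (h1 i 0).2 (Fin.zero_le i)

lemma chain_least (X : FinOrd) (hpo : X.IsPO) (S : Set X.carrier)
    (hchain : ∀ a ∈ S, ∀ b ∈ S, X.le a b ∨ X.le b a) (hne : S.Nonempty) :
    ∃ g ∈ S, ∀ s ∈ S, X.le g s := by
  obtain ⟨m, x, h1, h2, h3⟩ := enum_chain X hpo S hchain hne
  refine ⟨x (Fin.last m), h2 _, fun s hs => ?_⟩
  obtain ⟨i, rfl⟩ := h3 s hs
  exact (h1 (Fin.last m) i).2 (Fin.le_last i)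

lemma exists_immpred (X : FinOrd) (hX : X.IsCoTree) (a c : X.carrier)
    (hac : X.le a c) (hne : a ≠ c) : ∃ z, ImmPred X z c ∧ X.le a z := by
  obtain ⟨⟨hrefl, htrans, hanti⟩, _, hup⟩ := hX
  set P : Set X.carrier := {v | X.le a v ∧ X.le v c ∧ v ≠ c} with hP
  have hchain : ∀ u ∈ P, ∀ v ∈ P, X.le u v ∨ X.le v u := fun u hu v hv =>
    hup a u v hu.1 hv.1
  have hnem : P.Nonempty := ⟨a, hrefl a, hac, hne⟩
  obtain ⟨z, hz, hg⟩ := chain_greatest X ⟨hrefl, htrans, hanti⟩ P hchain hnem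
  refine ⟨z, ⟨hz.2.1, hz.2.2, fun w hzw hwc => ?_⟩, hg a ⟨hrefl a, hac, hne⟩⟩
  by_cases hwc' : w = c
  · exact Or.inr hwc'
  · exact Or.inl (hanti _ _ (hg w ⟨htrans _ _ _ hz.1 hzw, hwc, hwc'⟩) hzw)

lemma branch_above (X : FinOrd) (hX : X.IsCoTree) (a b : X.carrier)
    (hab : ¬ X.le a b) (hba : ¬ X.le b a) :
    ∃ c, TwoPreds X c ∧ X.le a c ∧ X.le b c := by
  obtain ⟨⟨hrefl, htrans, hanti⟩, ⟨t, ht⟩, hup⟩ := hX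
  set T : Set X.carrier := {v | X.le a v ∧ X.le b v} with hT
  have hchain : ∀ u ∈ T, ∀ v ∈ T, X.le u v ∨ X.le v u := fun u hu v hv =>
    hup a u v hu.1 hv.1
  obtain ⟨c, hc, hl⟩ := chain_least X ⟨hrefl, htrans, hanti⟩ T hchain ⟨t, ht a, ht b⟩
  have hane : a ≠ c := fun h => hba (h ▸ hc.2)
  have hbne : b ≠ c := fun h => hab (h ▸ hc.1)
  obtain ⟨p, hp, hap⟩ := exists_immpred X ⟨⟨hrefl, htrans, hanti⟩, ⟨t, ht⟩, hup⟩ a c hc.1 hane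
  obtain ⟨q, hq, hbq⟩ := exists_immpred X ⟨⟨hrefl, htrans, hanti⟩, ⟨t, ht⟩, hup⟩ b c hc.2 hbne
  refine ⟨c, ⟨p, q, ?_, hp, hq⟩, hc.1, hc.2⟩
  rintro rfl
  exact hp.2.1 (hanti _ _ hp.1 (hl p ⟨hap, hbq⟩))

lemma immpred_incomp (X : FinOrd) (hX : X.IsCoTree) (z w c : X.carrier)
    (hz : ImmPred X z c) (hw : ImmPred X w c) (hne : w ≠ z) :
    ∀ a, X.le a z → ¬ X.le a w ∧ ¬ X.le w a := by
  obtain ⟨⟨hrefl, htrans, hanti⟩, _, hup⟩ := hX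
  have hwz : ¬ X.le w z := fun h =>
    (hw.2.2 z h hz.1).elim (fun h' => hne h'.symm) (fun h' => hz.2.1 h')
  have hzw : ¬ X.le z w := fun h =>
    (hz.2.2 w h hw.1).elim (fun h' => hne h') (fun h' => hw.2.1 h')
  intro a haz
  constructor
  · intro haw
    rcases hup a z w haz haw with h | h
    · exact hzw h
    · exact hwz h
  · intro hwa
    exact hwz (htrans _ _ _ hwa haz)

lemma comb_antisymm (k : ℕ) : ∀ a b : (comb k).carrier, (comb k).le a b → (comb k).le b a → a = b := by
  rintro (i | i) (j | j) h1 h2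
  · exact congrArg Sum.inl (le_antisymm h1 h2)
  · exact absurd h1 id
  · exact absurd h2 id
  · exact congrArg Sum.inr h1

lemma comb_refl_inj (k : ℕ) (X : FinOrd) (hpo : X.IsPO) (g : (comb k).carrier → X.carrier)
    (hiff : ∀ a b, (comb k).le a b ↔ X.le (g a) (g b)) : Function.Injective g := by
  intro a b hab
  have h1 : X.le (g a) (g b) := by rw [hab]; exact hpo.1 _
  have h2 : X.le (g b) (g a) := by rw [hab]; exact hpo.1 _
  exact comb_antisymm k a b ((hiff a b).2 h1) ((hiff b a).2 h2)


/-- Let `n ≥ 1`. A finite co-tree `X` admits no order embedding of the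
`(n+1)`-comb iff it decomposes as a chain `x 0 > x 1 > ⋯ > x m` (with `x 0` the
co-root) together with the principal downsets of the immediate predecessors of
`x m`, where `x m` is the greatest element with more than one immediate
predecessor (or the minimum of `X` if `X` is a chain), and each such principal
downset admits no order embedding of the `n`-comb. -/
theorem stmt_17 (n : ℕ) (hn : 1 ≤ n) (X : FinOrd) (hX : X.IsCoTree) :
    ¬ Embeds (comb (n+1)) X ↔
      ∃ (m : ℕ) (x : Fin (m+1) → X.carrier),
        (∀ i j, X.le (x i) (x j) ↔ j ≤ i) ∧
        (∀ a, X.le a (x 0)) ∧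
        (∀ z, TwoPreds X z → X.le z (x (Fin.last m))) ∧
        (TwoPreds X (x (Fin.last m)) ∨ ∀ a, X.le (x (Fin.last m)) a) ∧
        (∀ a, (∃ i, a = x i) ∨ ∃ z, ImmPred X z (x (Fin.last m)) ∧ X.le a z) ∧
        (∀ z, ImmPred X z (x (Fin.last m)) →
          ¬ EmbedsIn (comb n) X {a | X.le a z}) := by
  have hX' := hX
  obtain ⟨⟨hrefl, htrans, hanti⟩, ⟨t, ht⟩, hup⟩ := hX
  have hpo : X.IsPO := ⟨hrefl, htrans, hanti⟩
  constructor
  · intro hemb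
    haveI hfin : Finite X.carrier := X.fin
    by_cases hch : ∀ a b : X.carrier, X.le a b ∨ X.le b a
    · -- chain case
      obtain ⟨m, x, h1, h2, h3⟩ := enum_chain X hpo Set.univ (fun a _ b _ => hch a b) ⟨t, trivial⟩
      have hsurj : ∀ a, ∃ i, a = x i := fun a => h3 a trivial
      have hleast : ∀ a, X.le (x (Fin.last m)) a := by
        intro a; obtain ⟨i, rfl⟩ := hsurj a; exact (h1 _ i).2 (Fin.le_last i)
      refine ⟨m, x, h1, ?_, ?_, Or.inr hleast, fun a => Or.inl (hsurj a), ?_⟩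
      · intro a; obtain ⟨i, rfl⟩ := hsurj a; exact (h1 i 0).2 (Fin.zero_le i)
      · rintro z ⟨w, w', hne, hw, hw'⟩
        exfalso
        rcases hch w w' with h | h
        · rcases hw.2.2 w' h hw'.1 with h' | h'
          · exact hne h'.symm
          · exact hw'.2.1 h'
        · rcases hw'.2.2 w h hw.1 with h' | h'
          · exact hne h'
          · exact hw.2.1 h'
      · intro z hz _
        exact hz.2.1 (hanti _ _ hz.1 (hleast z))
    · -- branching case
      push_neg at hch
      obtain ⟨a0, b0, hab0, hba0⟩ := hch
      letI : PartialOrder X.carrier := {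
        le := X.le
        lt := fun a b => X.le a b ∧ ¬ X.le b a
        lt_iff_le_not_ge := fun _ _ => Iff.rfl
        le_refl := hrefl
        le_trans := htrans
        le_antisymm := hanti }
      set B : Set X.carrier := {z | TwoPreds X z} with hB
      have hBne : B.Nonempty := by
        obtain ⟨c, hc, -, -⟩ := branch_above X hX' a0 b0 hab0 hba0
        exact ⟨c, hc⟩
      obtain ⟨xm, hxmB, hxmMax'⟩ := Set.Finite.exists_maximalFor id B (Set.toFinite B) hBne
      simp only [id_eq] at hxmMax'
      have hxmMax : ∀ b ∈ B, xm ≤ b → xm = b := fun b hb h => hanti _ _ h (hxmMax' hb h)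
      have hBle : ∀ b ∈ B, X.le b xm := by
        intro b hb
        by_cases hc1 : X.le b xm
        · exact hc1
        by_cases hc2 : X.le xm b
        · rw [hxmMax b hb hc2]; exact hrefl b
        · obtain ⟨c, hc, hbc, hxc⟩ := branch_above X hX' b xm hc1 hc2
          rw [← hxmMax c hc hxc] at hbc
          exact hbc
      have compAll : ∀ a, X.le a xm ∨ X.le xm a := by
        intro a
        by_cases hc1 : X.le a xm
        · exact Or.inl hc1
        by_cases hc2 : X.le xm a
        · exact Or.inr hc2
        obtain ⟨c, hc, hac, hxc⟩ := branch_above X hX' a xm hc1 hc2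
        rw [← hxmMax c hc hxc] at hac
        exact Or.inl hac
      obtain ⟨m, x, h1, h2, h3⟩ := enum_chain X hpo {a | X.le xm a}
        (fun a ha b hb => hup xm a b ha hb) ⟨xm, hrefl xm⟩
      have hxlast : x (Fin.last m) = xm := by
        obtain ⟨i, hi⟩ := h3 xm (hrefl xm)
        refine hanti _ _ ?_ (h2 (Fin.last m))
        rw [hi]
        exact (h1 _ i).2 (Fin.le_last i)
      have htop : ∀ a, X.le a (x 0) := by
        intro a
        have ht0 : X.le t (x 0) := by
          obtain ⟨i, hi⟩ := h3 t (ht xm)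
          rw [hi]
          exact (h1 i 0).2 (Fin.zero_le i)
        exact htrans _ _ _ (ht a) ht0
      refine ⟨m, x, h1, htop, ?_, ?_, ?_, ?_⟩
      · intro z hz; rw [hxlast]; exact hBle z hz
      · left; rw [hxlast]; exact hxmB
      · intro a
        by_cases haS : X.le xm a
        · exact Or.inl ((h3 a haS).imp fun i hi => hi)
        · right
          have halexm : X.le a xm := (compAll a).resolve_right haS
          have hanexm : a ≠ xm := by rintro rfl; exact haS (hrefl a)
          obtain ⟨z, hz, haz⟩ := exists_immpred X hX' a xm halexm hanexm
          exact ⟨z, hxlast.symm ▸ hz, haz⟩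
      · rw [hxlast]
        intro z hz hembIn
        obtain ⟨w, w', hww', hw, hw'⟩ := hxmB
        obtain ⟨w2, hw2, hw2ne⟩ : ∃ w2, ImmPred X w2 xm ∧ w2 ≠ z := by
          by_cases hwz : w = z
          · exact ⟨w', hw', fun he => hww' (hwz.trans he.symm)⟩
          · exact ⟨w, hw, hwz⟩
        have hinc := immpred_incomp X hX' z w2 xm hz hw2 hw2ne
        obtain ⟨f, finj, fmem, fiff⟩ := hembIn
        have A2 : ∀ a, ¬ X.le (f a) w2 ∧ ¬ X.le w2 (f a) := fun a => hinc (f a) (fmem a)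
        have hxmz : ¬ X.le xm z := fun h => hz.2.1 (hanti _ _ hz.1 h)
        have A3 : ∀ a, ¬ X.le xm (f a) := fun a h => hxmz (htrans _ _ _ h (fmem a))
        have A4 : ∀ a, X.le (f a) xm := fun a => htrans _ _ _ (fmem a) hz.1
        have A5 : X.le w2 xm := hw2.1
        have A6 : ¬ X.le xm w2 := fun h => hw2.2.1 (hanti _ _ hw2.1 h)
        have A8 := hinc z (hrefl z)
        apply hemb
        set g : (comb (n+1)).carrier → X.carrier :=
          Sum.elim (fun i : Fin (n+1) => if h : i.val < n then f (Sum.inl ⟨i.val, h⟩) else xm)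
            (fun i : Fin (n+1) => if h : i.val < n then f (Sum.inr ⟨i.val, h⟩) else w2) with hg
        have hGiff : ∀ a b, (comb (n+1)).le a b ↔ X.le (g a) (g b) := by
          rintro (i | i) (j | j) <;>
            simp only [hg, Sum.elim_inl, Sum.elim_inr] <;>
            rw [show (comb (n+1)).le = combLE (n+1) from rfl]
          · by_cases hi : i.val < n <;> by_cases hj : j.val < n <;>
              simp only [dif_pos, dif_neg, hi, hj, dite_true, dite_false]
            · refine Iff.trans ?_ (fiff _ _)
              show ((i : ℕ) ≤ j) ↔ ((i : ℕ) ≤ j)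
              exact Iff.rfl
            · show ((i : ℕ) ≤ j) ↔ _
              have := j.isLt
              constructor
              · intro _; exact A4 _
              · intro _; omega
            · show ((i : ℕ) ≤ j) ↔ _
              have := i.isLt
              constructor
              · intro h; omega
              · intro h; exact absurd h (A3 _)
            · show ((i : ℕ) ≤ j) ↔ _
              constructor
              · intro _; exact hrefl xm
              · intro _; omega
          · by_cases hi : i.val < n <;> by_cases hj : j.val < n <;>
              simp only [dif_pos, dif_neg, hi, hj, dite_true, dite_false]
            · refine Iff.trans ?_ (fiff _ _)
              exact Iff.rfl
            · show False ↔ _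
              simp only [false_iff]
              exact (A2 _).1
            · show False ↔ _
              simp only [false_iff]
              exact A3 _
            · show False ↔ _
              simp only [false_iff]
              exact A6
          · by_cases hi : i.val < n <;> by_cases hj : j.val < n <;>
              simp only [dif_pos, dif_neg, hi, hj, dite_true, dite_false]
            · refine Iff.trans ?_ (fiff _ _)
              exact Iff.rfl
            · show ((i : ℕ) ≤ j) ↔ _
              have := j.isLt
              constructor
              · intro _; exact A4 _
              · intro _; omega
            · show ((i : ℕ) ≤ j) ↔ _
              have := i.isLt
              constructor
              · intro h; omega
              · intro h; exact absurd h (A2 _).2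
            · show ((i : ℕ) ≤ j) ↔ _
              constructor
              · intro _; exact A5
              · intro _; omega
          · by_cases hi : i.val < n <;> by_cases hj : j.val < n <;>
              simp only [dif_pos, dif_neg, hi, hj, dite_true, dite_false]
            · refine Iff.trans ?_ (fiff _ _)
              show (i = j) ↔ ((⟨i.val, hi⟩ : Fin n) = ⟨j.val, hj⟩)
              simp [Fin.ext_iff]
            · show (i = j) ↔ _
              have := i.isLt
              constructor
              · intro h; exfalso; rw [h] at this; omega
              · intro h; exact absurd h (A2 _).1
            · show (i = j) ↔ _
              have := j.isLt
              constructor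
              · intro h; exfalso; rw [← h] at this; omega
              · intro h; exact absurd h (A2 _).2
            · show (i = j) ↔ _
              constructor
              · intro _; exact hrefl w2
              · intro _
                have hi' := i.isLt
                have hj' := j.isLt
                exact Fin.ext (by omega)
        exact ⟨g, comb_refl_inj (n+1) X hpo g hGiff, hGiff⟩
  · rintro ⟨m, x, h1, h2, h3, h4, h5, h6⟩ ⟨g, ginj, giff⟩
    set xm := x (Fin.last m) with hxm
    have compAll : ∀ a, X.le a xm ∨ X.le xm a := by
      intro a
      rcases h5 a with ⟨i, rfl⟩ | ⟨z, hz, haz⟩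
      · exact Or.inr ((h1 (Fin.last m) i).2 (Fin.le_last i))
      · exact Or.inl (htrans _ _ _ haz hz.1)
    have hnn : n - 1 < n + 1 := by omega
    set jn : Fin (n+1) := ⟨n-1, hnn⟩ with hjn
    set tN : Fin (n+1) := ⟨n, by omega⟩ with htN
    have ht1 : ¬ X.le (g (Sum.inr tN)) (g (Sum.inl jn)) := by
      intro h
      have h' := (giff (Sum.inr tN) (Sum.inl jn)).2 h
      simp only [comb, combLE, htN, hjn, Fin.mk_le_mk] at h'
      omega
    have ht2 : ¬ X.le (g (Sum.inl jn)) (g (Sum.inr tN)) :=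
      fun h => (giff (Sum.inl jn) (Sum.inr tN)).2 h
    have hlow : ¬ X.le xm (g (Sum.inl jn)) := by
      intro h
      rcases compAll (g (Sum.inr tN)) with h' | h'
      · exact ht1 (htrans _ _ _ h' h)
      · rcases hup xm _ _ h h' with h'' | h''
        · exact ht2 h''
        · exact ht1 h''
    obtain ⟨z, hz, hgz⟩ : ∃ z, ImmPred X z xm ∧ X.le (g (Sum.inl jn)) z := by
      rcases h5 (g (Sum.inl jn)) with ⟨i, hi⟩ | ⟨z, hz, haz⟩
      · exact absurd (hi ▸ (h1 (Fin.last m) i).2 (Fin.le_last i)) hlow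
      · exact ⟨z, hz, haz⟩
    apply h6 z hz
    refine ⟨g ∘ Sum.map Fin.castSucc Fin.castSucc,
      ginj.comp (Function.Injective.sumMap (Fin.castSucc_injective n) (Fin.castSucc_injective n)),
      ?_, ?_⟩
    · have hgle : ∀ c : (comb (n+1)).carrier, (comb (n+1)).le c (Sum.inl jn) → X.le (g c) z :=
        fun c hc => htrans _ _ _ ((giff c (Sum.inl jn)).1 hc) hgz
      rintro (i | i)
      · exact hgle (Sum.inl i.castSucc) (show ((i : ℕ) ≤ n - 1) from by have := i.isLt; omega)
      · exact hgle (Sum.inr i.castSucc) (show ((i : ℕ) ≤ n - 1) from by have := i.isLt; omega)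
    · rintro (i | i) (j | j) <;>
      · show (comb n).le _ _ ↔ X.le (g (Sum.map Fin.castSucc Fin.castSucc _)) (g (Sum.map Fin.castSucc Fin.castSucc _))
        rw [show (comb n).le = combLE n from rfl]; refine Iff.trans ?_ (giff _ _)
        first
        | exact Iff.rfl
        | exact Fin.castSucc_inj.symm

end Paper
end

section
/- The map π sending a finite co-tree X in T_{n+1} with decomposition (upper chain-with-fan τ(m,k), lower multiset [↓y_0,...,↓y_k] of members of T_n) to the pair (τ(m,k), [↓y_0,...,↓y_k]) is order-reflecting from (T_{n+1}, ≤_p) to (T_2, ≤_p) × (T_n^#, <<): if τ(m,k) ≤_p τ(m',k') and [Y_0,...,Y_k] << [Y_0',...,Y_{k'}'], then X is a bi-p-morphic image of X'. -/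
namespace Paper

/-- The subposet of `X` on the subset `S`. -/
def FinOrd.sub (X : FinOrd) (S : Set X.carrier) : FinOrd where
  carrier := {a // a ∈ S}
  fin := by have := X.fin; exact Subtype.finite
  le a b := X.le a.1 b.1

/-- A decomposition of the co-tree `X` as in Figure 5: a chain
`x 0 > ⋯ > x m` headed by the co-root `x 0`, and the points `y 0, …, y k`
enumerating (without repetitions) the immediate predecessors of `x m`, whose
principal downsets cover the rest of `X`. -/
def Decomp (X : FinOrd) (m k : ℕ) (x : Fin (m+1) → X.carrier)
    (y : Fin (k+1) → X.carrier) : Prop :=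
  (∀ i j, X.le (x i) (x j) ↔ j ≤ i) ∧
  (∀ a, X.le a (x 0)) ∧
  Function.Injective y ∧
  (∀ i, ImmPred X (y i) (x (Fin.last m))) ∧
  (∀ z, ImmPred X z (x (Fin.last m)) → ∃ i, z = y i) ∧
  (∀ a, (∃ i, a = x i) ∨ ∃ i, X.le a (y i))

/-- The lower part of the decomposition: the finite multiset `[↓y 0, …, ↓y k]`. -/
def lowerPart (X : FinOrd) {k : ℕ} (y : Fin (k+1) → X.carrier) :
    Multiset FinOrd :=
  (Finset.univ.val.map fun i : Fin (k+1) => X.sub {a | X.le a (y i)})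


private lemma K2 {β : Type*} : ∀ {n : ℕ} {r : β → Fin n → Prop} {s : Multiset β},
    Multiset.Rel r s (Finset.univ.val) →
    ∃ c : Fin n → β, Finset.univ.val.map c = s ∧ ∀ j, r (c j) j := by
  intro n
  induction n with
  | zero =>
    intro r s h
    have : s = 0 := by
      have : Finset.univ.val = (0 : Multiset (Fin 0)) := rfl
      rw [this, Multiset.rel_zero_right] at h
      exact h
    exact ⟨Fin.elim0, by simp [this], fun j => j.elim0⟩
  | succ n ih =>
    intro r s h
    rw [Fin.univ_succ, Finset.cons_val, Multiset.rel_cons_right] at h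
    obtain ⟨a0, s', hr0, hrel, rfl⟩ := h
    rw [Finset.map_val, Multiset.rel_map_right] at hrel
    obtain ⟨c', hc1, hc2⟩ := ih hrel
    refine ⟨Fin.cases a0 c', ?_, ?_⟩
    · rw [Fin.univ_succ, Finset.cons_val, Multiset.map_cons, Finset.map_val,
        Multiset.map_map]
      simp only [Fin.cases_zero]
      rw [← hc1]
      congr 1
    · intro j
      induction j using Fin.cases with
      | zero => simpa using hr0
      | succ i => simpa using hc2 i

private lemma mproj_exists {α : Type*} {r : α → α → Prop} {n n' : ℕ} (u : Fin n → α) (v : Fin n' → α)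
    (h : MProj r (Finset.univ.val.map u) (Finset.univ.val.map v)) :
    ∃ σ : Fin n' → Fin n, Function.Surjective σ ∧ ∀ j, r (u (σ j)) (v j) := by
  obtain ⟨L, h1, h2, h3⟩ := h
  have hrel1 : Multiset.Rel (fun p i => Prod.fst p = u i) L Finset.univ.val := by
    rw [← Multiset.rel_map_right, ← Multiset.rel_map_left, Multiset.rel_eq]
    exact h1
  obtain ⟨c, hc1, hc2⟩ := K2 hrel1
  set P : Multiset (Fin n × α) :=
    (Finset.univ.val : Multiset (Fin n)).bind (fun i => (c i).2.map (fun p => (i, p))) with hP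
  have hcL : ∀ i, c i ∈ L := by
    intro i
    rw [← hc1]
    exact Multiset.mem_map_of_mem c (Finset.mem_univ_val i)
  have hP2 : P.map Prod.snd = Finset.univ.val.map v := by
    rw [hP, Multiset.map_bind]
    simp only [Multiset.map_map, Function.comp]
    have : ∀ i : Fin n, ((c i).2.map fun p => ((i, p) : Fin n × α)).map Prod.snd = (c i).2 := by
      intro i; rw [Multiset.map_map]; simp [Function.comp]
    rw [← h2, ← hc1, Multiset.map_map]
    simp only [Multiset.bind, Multiset.join, Function.comp]
    congr 1
    apply Multiset.map_congr rfl
    intro i _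
    exact Multiset.map_id' _
  have hPr : ∀ q ∈ P, r (u q.1) q.2 := by
    intro q hq
    rw [hP, Multiset.mem_bind] at hq
    obtain ⟨i, _, hq2⟩ := hq
    rw [Multiset.mem_map] at hq2
    obtain ⟨p, hp, rfl⟩ := hq2
    have := (h3 (c i) (hcL i)).2 p hp
    rwa [hc2 i] at this
  have hrel2 : Multiset.Rel (fun q j => Prod.snd q = v j) P Finset.univ.val := by
    rw [← Multiset.rel_map_right, ← Multiset.rel_map_left, Multiset.rel_eq]
    exact hP2
  obtain ⟨d, hd1, hd2⟩ := K2 hrel2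
  refine ⟨fun j => (d j).1, ?_, ?_⟩
  · intro i
    obtain ⟨p, hp⟩ := Multiset.exists_mem_of_ne_zero (h3 (c i) (hcL i)).1
    have hip : ((i, p) : Fin n × α) ∈ P := by
      rw [hP, Multiset.mem_bind]
      exact ⟨i, Finset.mem_univ_val i, Multiset.mem_map_of_mem _ hp⟩
    rw [← hd1, Multiset.mem_map] at hip
    obtain ⟨j, _, hj⟩ := hip
    exact ⟨j, by show (d j).1 = i; rw [hj]⟩
  · intro j
    have hdj : d j ∈ P := by
      rw [← hd1]
      exact Multiset.mem_map_of_mem d (Finset.mem_univ_val j)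
    have := hPr _ hdj
    rwa [hd2 j] at this


private lemma tau_no_inr_to_inl {m k m' k' : ℕ}
    {g : (tau m' k').carrier → (tau m k).carrier}
    (hbi : IsBiPMorphism (tau m' k') (tau m k) g) :
    ∀ (t : Fin (k'+1)) (i : Fin (m+1)), g (Sum.inr t) ≠ Sum.inl i := by
  intro t i he
  obtain ⟨z, hz1, hz2⟩ := hbi.2.2 (Sum.inr t) (Sum.inr 0) (by rw [he]; trivial)
  cases z with
  | inl a => exact hz1.elim
  | inr a =>
    have : a = t := hz1
    subst this
    rw [hz2] at he
    cases he

private lemma height_le {m k m' k' : ℕ} (hτ : PImage (tau m k) (tau m' k')) : m ≤ m' := by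
  obtain ⟨g, hs, hbi⟩ := hτ
  have hex : ∀ i : Fin (m+1), ∃ b : Fin (m'+1), g (Sum.inl b) = Sum.inl i := by
    intro i
    obtain ⟨z, hz⟩ := hs (Sum.inl i)
    cases z with
    | inl b => exact ⟨b, hz⟩
    | inr t => exact absurd hz (tau_no_inr_to_inl hbi t i)
  choose b hb using hex
  have hinj : Function.Injective b := by
    intro i i' he
    have h2 := hb i'
    rw [← he, hb i] at h2
    exact Sum.inl.inj h2
  have := Fintype.card_le_of_injective b hinj
  simpa using this

section DecompFacts

variable {X : FinOrd} {m k : ℕ} {x : Fin (m+1) → X.carrier} {y : Fin (k+1) → X.carrier}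

private lemma y_le_x (hX : X.IsCoTree) (hd : Decomp X m k x y) (i : Fin (k+1)) (j : Fin (m+1)) :
    X.le (y i) (x j) :=
  hX.1.2.1 _ _ _ (hd.2.2.2.1 i).1 ((hd.1 (Fin.last m) j).2 (Fin.le_last j))

private lemma x_inj (hd : Decomp X m k x y) : Function.Injective x := by
  intro i j he
  have h1 : X.le (x i) (x j) := by rw [he]; exact (hd.1 j j).2 le_rfl
  have h2 : X.le (x j) (x i) := by rw [he]; exact (hd.1 j j).2 le_rfl
  exact le_antisymm ((hd.1 j i).1 h2) ((hd.1 i j).1 h1)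

private lemma not_x_le_y (hX : X.IsCoTree) (hd : Decomp X m k x y) (i : Fin (m+1))
    (j : Fin (k+1)) : ¬ X.le (x i) (y j) := by
  intro hle
  have h1 : X.le (x i) (x (Fin.last m)) := hX.1.2.1 _ _ _ hle (hd.2.2.2.1 j).1
  have h2 : Fin.last m ≤ i := (hd.1 i (Fin.last m)).1 h1
  have h3 : i = Fin.last m := le_antisymm (Fin.le_last i) h2
  subst h3
  exact (hd.2.2.2.1 j).2.1 (hX.1.2.2 _ _ (hd.2.2.2.1 j).1 hle)

private lemma downset_unique (hX : X.IsCoTree) (hd : Decomp X m k x y) {a : X.carrier}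
    {i j : Fin (k+1)} (hi : X.le a (y i)) (hj : X.le a (y j)) : i = j := by
  have hcmp := hX.2.2 a (y i) (y j) hi hj
  have key : ∀ i j : Fin (k+1), X.le (y i) (y j) → i = j := by
    intro i j hle
    rcases (hd.2.2.2.1 i).2.2 (y j) hle (hd.2.2.2.1 j).1 with h | h
    · exact (hd.2.2.1 h).symm
    · exact absurd h (hd.2.2.2.1 j).2.1
  rcases hcmp with h | h
  · exact key i j h
  · exact (key j i h).symm

private lemma above_y (hX : X.IsCoTree) (hd : Decomp X m k x y) {i : Fin (k+1)} {b : X.carrier}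
    (hle : X.le (y i) b) : b = y i ∨ ∃ t, b = x t := by
  rcases hd.2.2.2.2.2 b with h | ⟨j, hj⟩
  · exact Or.inr h
  · left
    have hij : i = j := downset_unique hX hd (hX.1.1 (y i)) (hX.1.2.1 _ _ _ hle hj)
    subst hij
    exact hX.1.2.2 _ _ hj hle

private lemma above_x (hX : X.IsCoTree) (hd : Decomp X m k x y) {t : Fin (m+1)} {b : X.carrier}
    (hle : X.le (x t) b) : ∃ s, s ≤ t ∧ b = x s := by
  rcases hd.2.2.2.2.2 b with ⟨s, hs⟩ | ⟨j, hj⟩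
  · subst hs
    exact ⟨s, (hd.1 t s).1 hle, rfl⟩
  · exact absurd (hX.1.2.1 _ _ _ hle hj) (not_x_le_y hX hd t j)

end DecompFacts


/-- The decomposition map `π : T_{n+1} → T_2 × T_n^#` is order reflecting: if
`τ(m,k) ≤ₚ τ(m',k')` and `[↓y 0,…,↓y k] << [↓y' 0,…,↓y' k']` (w.r.t. the
multiset projectivity relation over `≤ₚ`), then `X` is a bi-p-morphic image
of `X'`. -/
theorem stmt_18 (n : ℕ) (hn : 1 ≤ n) (X X' : FinOrd)
    (hX : X.IsCoTree) (hX' : X'.IsCoTree)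
    (hXn : ¬ Embeds (comb (n+1)) X) (hX'n : ¬ Embeds (comb (n+1)) X')
    (m k m' k' : ℕ)
    (x : Fin (m+1) → X.carrier) (y : Fin (k+1) → X.carrier)
    (x' : Fin (m'+1) → X'.carrier) (y' : Fin (k'+1) → X'.carrier)
    (hd : Decomp X m k x y) (hd' : Decomp X' m' k' x' y')
    (hτ : PImage (tau m k) (tau m' k'))
    (hms : MProj PImage (lowerPart X y) (lowerPart X' y')) :
    PImage X X' := by
  classical
  -- extract the indexed data from the multiset projectivity hypothesis
  obtain ⟨σ, hσ, hpi⟩ := mproj_exists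
    (fun i : Fin (k+1) => X.sub {a | X.le a (y i)})
    (fun j : Fin (k'+1) => X'.sub {a | X'.le a (y' j)}) hms
  choose h hhs hhb using hpi
  have hmm' : m ≤ m' := height_le hτ
  -- the glued map
  have hFdef : ∃ F : X'.carrier → X.carrier,
      (∀ (j : Fin (k'+1)) (a : X'.carrier) (ha : X'.le a (y' j)),
        F a = (h j ⟨a, ha⟩).val) ∧
      (∀ i : Fin (m'+1),
        F (x' i) = x ⟨min i.val m, Nat.lt_succ_of_le (Nat.min_le_right _ _)⟩) := by
    refine ⟨fun a =>
      if hj : ∃ j, X'.le a (y' j) then (h hj.choose ⟨a, hj.choose_spec⟩).val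
      else x ⟨min ((hd'.2.2.2.2.2 a).resolve_right hj).choose.val m,
        Nat.lt_succ_of_le (Nat.min_le_right _ _)⟩, ?_, ?_⟩
    · intro j a ha
      have hex : ∃ j', X'.le a (y' j') := ⟨j, ha⟩
      simp only [dif_pos hex]
      have he : hex.choose = j := downset_unique hX' hd' hex.choose_spec ha
      subst he
      rfl
    · intro i
      have hnex : ¬ ∃ j, X'.le (x' i) (y' j) := by
        rintro ⟨j, hj⟩
        exact not_x_le_y hX' hd' i j hj
      simp only [dif_neg hnex]
      have he : ((hd'.2.2.2.2.2 (x' i)).resolve_right hnex).choose = i :=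
        x_inj hd' ((hd'.2.2.2.2.2 (x' i)).resolve_right hnex).choose_spec.symm
      rw [he]
  obtain ⟨F, hF1, hF2⟩ := hFdef
  have hFy : ∀ (j : Fin (k'+1)) (a : X'.carrier) (ha : X'.le a (y' j)),
      X.le (F a) (y (σ j)) := by
    intro j a ha
    rw [hF1 j a ha]
    exact (h j ⟨a, ha⟩).2
  refine ⟨F, ?_, ?_, ?_, ?_⟩
  -- surjectivity
  · intro b
    rcases hd.2.2.2.2.2 b with ⟨t, rfl⟩ | ⟨i, hb⟩
    · refine ⟨x' ⟨t.val, by omega⟩, ?_⟩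
      rw [hF2]
      congr 1
      ext
      simp only
      omega
    · obtain ⟨j, hj⟩ := hσ i
      obtain ⟨w, hw⟩ := hhs j ⟨b, show X.le b (y (σ j)) by rw [hj]; exact hb⟩
      refine ⟨w.val, ?_⟩
      rw [hF1 j w.val w.2]
      exact congrArg Subtype.val hw
  -- monotone
  · intro a b hab
    rcases hd'.2.2.2.2.2 a with ⟨i, rfl⟩ | ⟨j, hja⟩
    · rcases hd'.2.2.2.2.2 b with ⟨i', rfl⟩ | ⟨j', hjb⟩
      · rw [hF2, hF2]
        refine (hd.1 _ _).2 ?_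
        have hii : i' ≤ i := (hd'.1 i i').1 hab
        rw [Fin.le_def] at hii ⊢
        simp only
        omega
      · exact absurd (hX'.1.2.1 _ _ _ hab hjb) (not_x_le_y hX' hd' i j')
    · rcases hd'.2.2.2.2.2 b with ⟨i', rfl⟩ | ⟨j', hjb⟩
      · rw [hF2]
        exact hX.1.2.1 _ _ _ (hFy j a hja) (y_le_x hX hd (σ j) _)
      · have hjj : j = j' := downset_unique hX' hd' hja (hX'.1.2.1 _ _ _ hab hjb)
        subst hjj
        rw [hF1 j a hja, hF1 j b hjb]
        exact (hhb j).1 ⟨a, hja⟩ ⟨b, hjb⟩ hab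
  -- up-back
  · intro a yy hle
    rcases hd'.2.2.2.2.2 a with ⟨i, rfl⟩ | ⟨j, hja⟩
    · rw [hF2] at hle
      obtain ⟨s, hs, rfl⟩ := above_x hX hd hle
      refine ⟨x' ⟨s.val, by omega⟩, ?_, ?_⟩
      · refine (hd'.1 _ _).2 ?_
        rw [Fin.le_def] at hs ⊢
        simp only at hs ⊢
        omega
      · rw [hF2]
        congr 1
        ext
        simp only
        omega
    · rw [hF1 j a hja] at hle
      by_cases hyy : X.le yy (y (σ j))
      · obtain ⟨z, hz1, hz2⟩ := (hhb j).2.1 ⟨a, hja⟩ ⟨yy, hyy⟩ hle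
        refine ⟨z.val, hz1, ?_⟩
        rw [hF1 j z.val z.2]
        exact congrArg Subtype.val hz2
      · rcases hX.2.2 _ _ _ (h j ⟨a, hja⟩).2 hle with h1 | h1
        · rcases above_y hX hd h1 with h2 | ⟨t, rfl⟩
          · exact absurd (h2 ▸ hX.1.1 yy) hyy
          · refine ⟨x' ⟨t.val, by omega⟩, ?_, ?_⟩
            · exact hX'.1.2.1 _ _ _ hja (y_le_x hX' hd' j _)
            · rw [hF2]
              congr 1
              ext
              simp only
              omega
        · exact absurd h1 hyy
  -- down-back
  · intro a yy hle
    rcases hd'.2.2.2.2.2 a with ⟨i, rfl⟩ | ⟨j, hja⟩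
    · rw [hF2] at hle
      rcases hd.2.2.2.2.2 yy with ⟨t, rfl⟩ | ⟨t, hyt⟩
      · have htr := (hd.1 t _).1 hle
        rw [Fin.le_def] at htr
        simp only at htr
        refine ⟨x' ⟨max i.val t.val, by omega⟩, ?_, ?_⟩
        · refine (hd'.1 _ _).2 ?_
          rw [Fin.le_def]
          simp only
          omega
        · rw [hF2]
          congr 1
          ext
          simp only
          omega
      · obtain ⟨j, hj⟩ := hσ t
        obtain ⟨w, hw⟩ := hhs j ⟨yy, show X.le yy (y (σ j)) by rw [hj]; exact hyt⟩
        refine ⟨w.val, ?_, ?_⟩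
        · exact hX'.1.2.1 _ _ _ w.2 (y_le_x hX' hd' j i)
        · rw [hF1 j w.val w.2]
          exact congrArg Subtype.val hw
    · rw [hF1 j a hja] at hle
      have hy2 : X.le yy (y (σ j)) := hX.1.2.1 _ _ _ hle (h j ⟨a, hja⟩).2
      obtain ⟨z, hz1, hz2⟩ := (hhb j).2.2 ⟨a, hja⟩ ⟨yy, hy2⟩ hle
      refine ⟨z.val, hz1, ?_⟩
      rw [hF1 j z.val z.2]
      exact congrArg Subtype.val hz2


end Paper
end
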